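/- arXiv:math/0604347 — 11 statements merged into one kernel-verified Lean document; each statement's English description precedes it below -/
import Mathlib

section
/- Suppose k ≥ 2 is the least integer for which there exist k disjoint congruence classes a_i (mod m_i), with each m_i a positive integer, satisfying gcd(m_i, m_j) < k for all i < j. Then k ≠ 24 and k ≠ 30. -/
/-- The congruence class of `a` modulo `m`, as a set of integers. -/
def congClass (a : ℤ) (m : ℕ) : Set ℤ :=
  {x : ℤ | Int.ModEq (m : ℤ) x a}

/-- `k` is a counterexample to the Disjoint Congruence Classes Conjecture:
there are `k` pairwise disjoint congruence classes whose moduli have pairwise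
gcds all strictly less than `k`. -/
def IsCounterexample (k : ℕ) : Prop :=
  ∃ (a : Fin k → ℤ) (m : Fin k → ℕ),
    (∀ i, 0 < m i) ∧
    (∀ i j, i ≠ j → Disjoint (congClass (a i) (m i)) (congClass (a j) (m j))) ∧
    (∀ i j, i ≠ j → Nat.gcd (m i) (m j) < k)

lemma not_disjoint_of_gcd_dvd (a b : ℤ) (m n : ℕ) (h : (Nat.gcd m n : ℤ) ∣ a - b) :
    ¬ Disjoint (congClass a m) (congClass b n) := by
  obtain ⟨w, hw⟩ := h
  have hg : (Nat.gcd m n : ℤ) = m * Int.gcdA m n + n * Int.gcdB m n := by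
    have := Int.gcd_eq_gcd_ab (m : ℤ) (n : ℤ)
    rwa [Int.gcd_natCast_natCast] at this
  intro hd
  set x : ℤ := a - m * Int.gcdA m n * w with hx
  have hx1 : x ∈ congClass a m := by
    show Int.ModEq (m : ℤ) x a
    have : (m : ℤ) ∣ a - x := ⟨Int.gcdA m n * w, by rw [hx]; ring⟩
    exact (Int.modEq_iff_dvd.mpr this)
  have hx2 : x ∈ congClass b n := by
    show Int.ModEq (n : ℤ) x b
    have : (n : ℤ) ∣ b - x := by
      refine ⟨-(Int.gcdB m n * w), ?_⟩
      have : b - x = -(a - b) + (m * Int.gcdA m n) * w := by rw [hx]; ring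
      rw [this, hw, hg]; ring
    exact (Int.modEq_iff_dvd.mpr this)
  exact Set.disjoint_left.mp hd hx1 hx2


lemma prime_odd_le9 (p : ℕ) (hp : p.Prime) (h2 : p ≠ 2) (h9 : p ≤ 9) :
    p = 3 ∨ p = 5 ∨ p = 7 := by
  have := hp.two_le
  interval_cases p <;> first | omega | (revert hp; decide)

lemma reduce (q B : ℕ) (hq : Nat.Prime q) (hq29 : q ≤ 29)
    (hB : ((Finset.range q).filter Nat.Prime).card = B)
    (hopt : ∀ a b c : ℕ, 1 ≤ a → 1 ≤ b → 1 ≤ c → a + b + c ≤ B → B + (2*a + b*c) < q + 1)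
    (hce : IsCounterexample (q+1)) : IsCounterexample q := by
  obtain ⟨a, m, hm, hdisj, hgcd⟩ := hce
  have hq2 : 2 ≤ q := hq.two_le
  have hD : ∀ i j, i ≠ j → ¬ ((Nat.gcd (m i) (m j) : ℤ) ∣ a i - a j) := fun i j hne hdvd =>
    not_disjoint_of_gcd_dvd _ _ _ _ hdvd (hdisj i j hne)
  have hgle : ∀ i j, i ≠ j → Nat.gcd (m i) (m j) ≤ q := fun i j hne => by
    have := hgcd i j hne; omega
  have hg2 : ∀ i j, i ≠ j → 2 ≤ Nat.gcd (m i) (m j) := by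
    intro i j hne
    have hpos : 0 < Nat.gcd (m i) (m j) := Nat.gcd_pos_of_pos_left _ (hm i)
    by_contra h
    have h1 : Nat.gcd (m i) (m j) = 1 := by omega
    refine hD i j hne ?_
    rw [h1]; exact_mod_cast one_dvd _
  set S : Finset (Fin (q+1)) := Finset.univ.filter (fun i => q ∣ m i) with hSdef
  by_cases hS2 : S.card ≤ 2
  · -- small S: build a counterexample of size q
    have hex : ∃ i₁ : Fin (q+1), S.Nonempty → i₁ ∈ S := by
      by_cases h : S.Nonempty
      · exact ⟨h.choose, fun _ => h.choose_spec⟩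
      · exact ⟨⟨0, by omega⟩, fun hh => absurd hh h⟩
    obtain ⟨i₁, hi₁⟩ := hex
    refine ⟨fun j => a (i₁.succAbove j), fun j => m (i₁.succAbove j), fun j => hm _, ?_, ?_⟩
    · intro i j hne
      exact hdisj _ _ (fun h => hne (Fin.succAbove_right_injective h))
    · intro i j hne
      have hne' : i₁.succAbove i ≠ i₁.succAbove j := fun h => hne (Fin.succAbove_right_injective h)
      have hle := hgle _ _ hne'
      rcases lt_or_eq_of_le hle with h | h
      · exact h
      · exfalso
        have hdvdu : q ∣ m (i₁.succAbove i) := by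
          have h' := Nat.gcd_dvd_left (m (i₁.succAbove i)) (m (i₁.succAbove j))
          rwa [h] at h'
        have hdvdv : q ∣ m (i₁.succAbove j) := by
          have h' := Nat.gcd_dvd_right (m (i₁.succAbove i)) (m (i₁.succAbove j))
          rwa [h] at h'
        have hu : i₁.succAbove i ∈ S := by simp [hSdef, hdvdu]
        have hv : i₁.succAbove j ∈ S := by simp [hSdef, hdvdv]
        have hi₁S : i₁ ∈ S := hi₁ ⟨_, hu⟩
        have hsub : ({i₁.succAbove i, i₁.succAbove j, i₁} : Finset (Fin (q+1))) ⊆ S := by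
          intro x hx
          simp only [Finset.mem_insert, Finset.mem_singleton] at hx
          rcases hx with rfl | rfl | rfl <;> assumption
        have hcard : ({i₁.succAbove i, i₁.succAbove j, i₁} : Finset (Fin (q+1))).card = 3 := by
          rw [Finset.card_insert_of_notMem (by simp [hne', Fin.succAbove_ne]),
            Finset.card_insert_of_notMem (by simp [Fin.succAbove_ne]), Finset.card_singleton]
        have := Finset.card_le_card hsub
        omega
  · push_neg at hS2
    exfalso
    set O : Finset (Fin (q+1)) := Finset.univ.filter (fun i => ¬ q ∣ m i) with hOdef
    have hOmem : ∀ j, j ∈ O ↔ ¬ q ∣ m j := by intro j; simp [hOdef]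
    have hSmem : ∀ i, i ∈ S ↔ q ∣ m i := by intro i; simp [hSdef]
    -- O is nonempty
    have hOne : O.Nonempty := by
      by_contra hno
      have hall : ∀ i, q ∣ m i := by
        intro i
        by_contra hni
        exact hno ⟨i, (hOmem i).mpr hni⟩
      haveI : NeZero q := ⟨by omega⟩
      have hcard : Fintype.card (ZMod q) < Fintype.card (Fin (q+1)) := by
        rw [ZMod.card, Fintype.card_fin]; omega
      obtain ⟨i, j, hne, heq⟩ :=
        Fintype.exists_ne_map_eq_of_card_lt (fun i => ((a i : ZMod q))) hcard
      have hdvd : (q : ℤ) ∣ a i - a j := by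
        have hz : ((a i - a j : ℤ) : ZMod q) = 0 := by push_cast [heq]; ring
        exact (ZMod.intCast_zmod_eq_zero_iff_dvd _ _).mp hz
      have hgq : Nat.gcd (m i) (m j) = q := le_antisymm (hgle i j hne)
        (Nat.le_of_dvd (Nat.gcd_pos_of_pos_left _ (hm i)) (Nat.dvd_gcd (hall i) (hall j)))
      refine hD i j hne ?_
      rw [hgq]; exact hdvd
    obtain ⟨j₀, hj₀⟩ := hOne
    set n : Fin (q+1) → ℕ := fun i => m i / q with hndef
    have hmn : ∀ i ∈ S, m i = q * n i := by
      intro i hi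
      exact (Nat.mul_div_cancel' ((hSmem i).mp hi)).symm
    have hSOne : ∀ i ∈ S, ∀ j ∈ O, i ≠ j := by
      intro i hi j hj h
      rw [h] at hi
      exact ((hOmem j).mp hj) ((hSmem j).mp hi)
    -- coprimality of the n's
    have hcop : ∀ i ∈ S, ∀ i' ∈ S, i ≠ i' → Nat.gcd (n i) (n i') = 1 := by
      intro i hi i' hi' hne
      have hgq : Nat.gcd (m i) (m i') = q := le_antisymm (hgle i i' hne)
        (Nat.le_of_dvd (Nat.gcd_pos_of_pos_left _ (hm i))
          (Nat.dvd_gcd ((hSmem i).mp hi) ((hSmem i').mp hi')))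
      have hmul : q * Nat.gcd (n i) (n i') = q * 1 := by
        rw [← Nat.gcd_mul_left, ← hmn i hi, ← hmn i' hi', hgq, mul_one]
      exact Nat.eq_of_mul_eq_mul_left (by omega) hmul
    have hnop : ∀ i ∈ S, ∀ i' ∈ S, i ≠ i' → ∀ p : ℕ, p.Prime → p ∣ n i → p ∣ n i' → False := by
      intro i hi i' hi' hne p hp h1 h2
      have := Nat.dvd_gcd h1 h2
      rw [hcop i hi i' hi' hne] at this
      exact hp.one_lt.ne' (Nat.dvd_one.mp this)
    have hgn : ∀ i ∈ S, ∀ j ∈ O, Nat.gcd (n i) (m j) = Nat.gcd (m i) (m j) := by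
      intro i hi j hj
      have hcq : Nat.Coprime q (m j) := (Nat.Prime.coprime_iff_not_dvd hq).mpr ((hOmem j).mp hj)
      rw [hmn i hi, Nat.Coprime.gcd_mul_left_cancel _ hcq]
    -- facts about minimal prime factors of gcd (n i) (m j)
    have hsig : ∀ i ∈ S, ∀ j ∈ O,
        (Nat.gcd (n i) (m j)).minFac.Prime ∧ (Nat.gcd (n i) (m j)).minFac ∣ n i ∧
        (Nat.gcd (n i) (m j)).minFac ∣ m j ∧ (Nat.gcd (n i) (m j)).minFac < q := by
      intro i hi j hj
      have hne := hSOne i hi j hj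
      have h2 : 2 ≤ Nat.gcd (n i) (m j) := by
        rw [hgn i hi j hj]; exact hg2 i j hne
      have hp : (Nat.gcd (n i) (m j)).minFac.Prime := Nat.minFac_prime (by omega)
      have hd1 : (Nat.gcd (n i) (m j)).minFac ∣ n i :=
        (Nat.minFac_dvd _).trans (Nat.gcd_dvd_left _ _)
      have hd2 : (Nat.gcd (n i) (m j)).minFac ∣ m j :=
        (Nat.minFac_dvd _).trans (Nat.gcd_dvd_right _ _)
      have hle : (Nat.gcd (n i) (m j)).minFac ≤ q := by
        calc (Nat.gcd (n i) (m j)).minFac ≤ Nat.gcd (n i) (m j) := Nat.minFac_le (by omega)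
          _ = Nat.gcd (m i) (m j) := hgn i hi j hj
          _ ≤ q := hgle i j hne
      have hqne : (Nat.gcd (n i) (m j)).minFac ≠ q := by
        intro h
        exact ((hOmem j).mp hj) (h ▸ hd2)
      exact ⟨hp, hd1, hd2, lt_of_le_of_ne hle hqne⟩
    -- |S| ≤ B
    have hScard : S.card ≤ B := by
      rw [← hB]
      apply Finset.card_le_card_of_injOn (fun i => (Nat.gcd (n i) (m j₀)).minFac)
      · intro i hi
        obtain ⟨hp, _, _, hlt⟩ := hsig i hi j₀ hj₀
        simp only [Finset.mem_coe, Finset.mem_filter, Finset.mem_range]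
        exact ⟨hlt, hp⟩
      · intro i hi i' hi' heq
        by_contra hne
        obtain ⟨hp, hd1, _, _⟩ := hsig i hi j₀ hj₀
        obtain ⟨_, hd1', _, _⟩ := hsig i' hi' j₀ hj₀
        have heq' : (Nat.gcd (n i) (m j₀)).minFac = (Nat.gcd (n i') (m j₀)).minFac := heq
        exact hnop i hi i' hi' hne _ hp hd1 (heq' ▸ hd1')
    -- pick three distinct elements of S, with n i₂ and n i₃ odd
    obtain ⟨x, y, z, hx, hy, hz, hxy, hxz, hyz⟩ := Finset.two_lt_card_iff.mp hS2
    have hpair2 : ∀ i ∈ S, ∀ i' ∈ S, i ≠ i' → 2 ∣ n i → 2 ∣ n i' → False :=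
      fun i hi i' hi' hne h1 h2 => hnop i hi i' hi' hne 2 Nat.prime_two h1 h2
    obtain ⟨i₁, i₂, i₃, h₁S, h₂S, h₃S, h12, h13, h23, hodd₂, hodd₃⟩ :
        ∃ i₁ i₂ i₃ : Fin (q+1), i₁ ∈ S ∧ i₂ ∈ S ∧ i₃ ∈ S ∧ i₁ ≠ i₂ ∧ i₁ ≠ i₃ ∧ i₂ ≠ i₃ ∧
          ¬ 2 ∣ n i₂ ∧ ¬ 2 ∣ n i₃ := by
      by_cases h2y : 2 ∣ n y
      · exact ⟨y, x, z, hy, hx, hz, Ne.symm hxy, hyz, hxz,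
          fun h => hpair2 y hy x hx (Ne.symm hxy) h2y h,
          fun h => hpair2 y hy z hz hyz h2y h⟩
      · by_cases h2z : 2 ∣ n z
        · exact ⟨z, x, y, hz, hx, hy, Ne.symm hxz, Ne.symm hyz, hxy,
            fun h => hpair2 z hz x hx (Ne.symm hxz) h2z h,
            fun h => hpair2 z hz y hy (Ne.symm hyz) h2z h⟩
        · exact ⟨x, y, z, hx, hy, hz, hxy, hxz, hyz, h2y, h2z⟩
    -- signatures and pools
    set σ₁ : Fin (q+1) → ℕ := fun j => (Nat.gcd (n i₁) (m j)).minFac with hσ₁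
    set σ₂ : Fin (q+1) → ℕ := fun j => (Nat.gcd (n i₂) (m j)).minFac with hσ₂
    set σ₃ : Fin (q+1) → ℕ := fun j => (Nat.gcd (n i₃) (m j)).minFac with hσ₃
    set pool₁ : Finset ℕ := (Finset.range q).filter (fun p => p.Prime ∧ p ∣ n i₁) with hpool₁
    set pool₂ : Finset ℕ := (Finset.range q).filter (fun p => p.Prime ∧ p ∣ n i₂) with hpool₂
    set pool₃ : Finset ℕ := (Finset.range q).filter (fun p => p.Prime ∧ p ∣ n i₃) with hpool₃
    have hσ₁mem : ∀ j ∈ O, σ₁ j ∈ pool₁ := by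
      intro j hj
      obtain ⟨hp, hd1, _, hlt⟩ := hsig i₁ h₁S j hj
      simp only [hpool₁, Finset.mem_filter, Finset.mem_range]
      exact ⟨hlt, hp, hd1⟩
    have hσ₂mem : ∀ j ∈ O, σ₂ j ∈ pool₂ := by
      intro j hj
      obtain ⟨hp, hd1, _, hlt⟩ := hsig i₂ h₂S j hj
      simp only [hpool₂, Finset.mem_filter, Finset.mem_range]
      exact ⟨hlt, hp, hd1⟩
    have hσ₃mem : ∀ j ∈ O, σ₃ j ∈ pool₃ := by
      intro j hj
      obtain ⟨hp, hd1, _, hlt⟩ := hsig i₃ h₃S j hj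
      simp only [hpool₃, Finset.mem_filter, Finset.mem_range]
      exact ⟨hlt, hp, hd1⟩
    -- pools are disjoint, contained in primes < q
    have hsum : pool₁.card + pool₂.card + pool₃.card ≤ B := by
      have hd12 : Disjoint pool₁ pool₂ := by
        rw [Finset.disjoint_left]
        intro p hp1 hp2
        simp only [hpool₁, hpool₂, Finset.mem_filter, Finset.mem_range] at hp1 hp2
        exact hnop i₁ h₁S i₂ h₂S h12 p hp1.2.1 hp1.2.2 hp2.2.2
      have hd13 : Disjoint pool₁ pool₃ := by
        rw [Finset.disjoint_left]
        intro p hp1 hp2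
        simp only [hpool₁, hpool₃, Finset.mem_filter, Finset.mem_range] at hp1 hp2
        exact hnop i₁ h₁S i₃ h₃S h13 p hp1.2.1 hp1.2.2 hp2.2.2
      have hd23 : Disjoint pool₂ pool₃ := by
        rw [Finset.disjoint_left]
        intro p hp1 hp2
        simp only [hpool₂, hpool₃, Finset.mem_filter, Finset.mem_range] at hp1 hp2
        exact hnop i₂ h₂S i₃ h₃S h23 p hp1.2.1 hp1.2.2 hp2.2.2
      have hU : ((pool₁ ∪ pool₂) ∪ pool₃).card = pool₁.card + pool₂.card + pool₃.card := by
        rw [Finset.card_union_of_disjoint (by rw [Finset.disjoint_union_left]; exact ⟨hd13, hd23⟩),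
          Finset.card_union_of_disjoint hd12]
      rw [← hB, ← hU]
      apply Finset.card_le_card
      intro p hp
      simp only [Finset.mem_union, hpool₁, hpool₂, hpool₃, Finset.mem_filter,
        Finset.mem_range] at hp ⊢
      rcases hp with (h | h) | h <;> exact ⟨h.1, h.2.1⟩
    have hb1 : 1 ≤ pool₁.card := Finset.card_pos.mpr ⟨σ₁ j₀, hσ₁mem j₀ hj₀⟩
    have hb2 : 1 ≤ pool₂.card := Finset.card_pos.mpr ⟨σ₂ j₀, hσ₂mem j₀ hj₀⟩
    have hb3 : 1 ≤ pool₃.card := Finset.card_pos.mpr ⟨σ₃ j₀, hσ₃mem j₀ hj₀⟩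
    have hsig₁ : ∀ j ∈ O, (σ₁ j).Prime ∧ σ₁ j ∣ n i₁ ∧ σ₁ j ∣ m j ∧ σ₁ j < q :=
      fun j hj => hsig i₁ h₁S j hj
    have hsig₂ : ∀ j ∈ O, (σ₂ j).Prime ∧ σ₂ j ∣ n i₂ ∧ σ₂ j ∣ m j ∧ σ₂ j < q :=
      fun j hj => hsig i₂ h₂S j hj
    have hsig₃ : ∀ j ∈ O, (σ₃ j).Prime ∧ σ₃ j ∣ n i₃ ∧ σ₃ j ∣ m j ∧ σ₃ j < q :=
      fun j hj => hsig i₃ h₃S j hj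
    -- products of distinct primes dividing two moduli are at most q
    have hmul2 : ∀ (j l : Fin (q+1)), j ≠ l → ∀ p r : ℕ, p.Prime → r.Prime → p ≠ r →
        p ∣ m j → p ∣ m l → r ∣ m j → r ∣ m l → p * r ≤ q := by
      intro j l hne p r hp hr hpr hpj hpl hrj hrl
      have hco : Nat.Coprime p r := (Nat.coprime_primes hp hr).mpr hpr
      have h1 : p * r ∣ Nat.gcd (m j) (m l) :=
        Nat.dvd_gcd (hco.mul_dvd_of_dvd_of_dvd hpj hrj) (hco.mul_dvd_of_dvd_of_dvd hpl hrl)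
      exact le_trans (Nat.le_of_dvd (Nat.gcd_pos_of_pos_left _ (hm j)) h1) (hgle j l hne)
    have hmul3 : ∀ (j l : Fin (q+1)), j ≠ l → ∀ p r t : ℕ, p.Prime → r.Prime → t.Prime →
        p ≠ r → p ≠ t → r ≠ t → p ∣ m j → p ∣ m l → r ∣ m j → r ∣ m l → t ∣ m j → t ∣ m l →
        p * (r * t) ≤ q := by
      intro j l hne p r t hp hr ht hpr hpt hrt hpj hpl hrj hrl htj htl
      have hco : Nat.Coprime r t := (Nat.coprime_primes hr ht).mpr hrt
      have hco2 : Nat.Coprime p (r * t) :=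
        Nat.Coprime.mul_right ((Nat.coprime_primes hp hr).mpr hpr)
          ((Nat.coprime_primes hp ht).mpr hpt)
      have h1 : p * (r * t) ∣ Nat.gcd (m j) (m l) :=
        Nat.dvd_gcd (hco2.mul_dvd_of_dvd_of_dvd hpj (hco.mul_dvd_of_dvd_of_dvd hrj htj))
          (hco2.mul_dvd_of_dvd_of_dvd hpl (hco.mul_dvd_of_dvd_of_dvd hrl htl))
      exact le_trans (Nat.le_of_dvd (Nat.gcd_pos_of_pos_left _ (hm j)) h1) (hgle j l hne)
    -- two elements of O with equal (σ₂, σ₃) force special small values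
    have hVV : ∀ j ∈ O, ∀ l ∈ O, j ≠ l → σ₂ j = σ₂ l → σ₃ j = σ₃ l →
        (σ₂ j = 3 ∧ (σ₃ j = 5 ∨ σ₃ j = 7)) ∨ (σ₃ j = 3 ∧ (σ₂ j = 5 ∨ σ₂ j = 7)) := by
      intro j hj l hl hne h2 h3
      obtain ⟨hp2, hd2n, hd2m, _⟩ := hsig₂ j hj
      obtain ⟨hp3, hd3n, hd3m, _⟩ := hsig₃ j hj
      obtain ⟨_, _, hd2m', _⟩ := hsig₂ l hl
      obtain ⟨_, _, hd3m', _⟩ := hsig₃ l hl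
      have hne23 : σ₂ j ≠ σ₃ j := fun h => hnop i₂ h₂S i₃ h₃S h23 _ hp2 hd2n (h ▸ hd3n)
      have hprod : σ₂ j * σ₃ j ≤ 29 := by
        refine le_trans (hmul2 j l hne _ _ hp2 hp3 hne23 hd2m ?_ hd3m ?_) hq29
        · rw [h2]; exact hd2m'
        · rw [h3]; exact hd3m'
      have hn2 : σ₂ j ≠ 2 := fun h => hodd₂ (h ▸ hd2n)
      have hn3 : σ₃ j ≠ 2 := fun h => hodd₃ (h ▸ hd3n)
      have h2ge : 3 ≤ σ₂ j := by have := hp2.two_le; omega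
      have h3ge : 3 ≤ σ₃ j := by have := hp3.two_le; omega
      have h2le : σ₂ j ≤ 9 := by nlinarith
      have h3le : σ₃ j ≤ 9 := by nlinarith
      rcases prime_odd_le9 _ hp2 hn2 h2le with h2e | h2e | h2e <;>
        rcases prime_odd_le9 _ hp3 hn3 h3le with h3e | h3e | h3e <;>
          rw [h2e, h3e] at hprod hne23 ⊢ <;> omega
    classical
    set O₁ : Finset (Fin (q+1)) := O.filter (fun j =>
      (σ₂ j = 3 ∧ (σ₃ j = 5 ∨ σ₃ j = 7)) ∨ (σ₃ j = 3 ∧ (σ₂ j = 5 ∨ σ₂ j = 7))) with hO₁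
    set O₂ : Finset (Fin (q+1)) := O.filter (fun j =>
      ¬ ((σ₂ j = 3 ∧ (σ₃ j = 5 ∨ σ₃ j = 7)) ∨ (σ₃ j = 3 ∧ (σ₂ j = 5 ∨ σ₂ j = 7)))) with hO₂
    have hOsplit : O₁.card + O₂.card = O.card :=
      Finset.card_filter_add_card_filter_not _
    -- non-special elements have pairwise distinct (σ₂, σ₃)
    have hO2card : O₂.card ≤ pool₂.card * pool₃.card := by
      rw [← Finset.card_product]
      apply Finset.card_le_card_of_injOn (fun j => (σ₂ j, σ₃ j))
      · intro j hj
        have hjO : j ∈ O := Finset.filter_subset _ _ hj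
        exact Finset.mem_product.mpr ⟨hσ₂mem j hjO, hσ₃mem j hjO⟩
      · intro j hj l hl heq
        by_contra hne
        have hj' := Finset.mem_coe.mp hj
        have hl' := Finset.mem_coe.mp hl
        have h2 : σ₂ j = σ₂ l := congrArg Prod.fst heq
        have h3 : σ₃ j = σ₃ l := congrArg Prod.snd heq
        exact (Finset.mem_filter.mp hj').2
          (hVV j (Finset.filter_subset _ _ hj') l (Finset.filter_subset _ _ hl') hne h2 h3)
    -- special elements: at most 2 * pool₁.card
    have hO1card : O₁.card ≤ 2 * pool₁.card := by
      have h3or : ¬ 3 ∣ n i₂ ∨ ¬ 3 ∣ n i₃ := by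
        by_contra h
        push_neg at h
        exact hnop i₂ h₂S i₃ h₃S h23 3 (by norm_num) h.1 h.2
      -- generic fiber bound
      have hfib : ∀ u v : ℕ, u = 5 ∨ u = 7 → v = 3 →
          ((O.filter (fun j => σ₂ j = u ∧ σ₃ j = v)).card ≤ pool₁.card ∧
           (O.filter (fun j => σ₂ j = v ∧ σ₃ j = u)).card ≤ pool₁.card) := by
        intro u v hu hv
        constructor
        · apply Finset.card_le_card_of_injOn σ₁
          · intro j hj; exact hσ₁mem j (Finset.filter_subset _ _ hj)
          · intro j hj l hl heq
            by_contra hne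
            have hj' := Finset.mem_filter.mp (Finset.mem_coe.mp hj)
            have hl' := Finset.mem_filter.mp (Finset.mem_coe.mp hl)
            have hjO := hj'.1
            have hj2 := hj'.2.1
            have hj3 := hj'.2.2
            have hlO := hl'.1
            have hl2 := hl'.2.1
            have hl3 := hl'.2.2
            obtain ⟨hp1, hd1n, hd1m, _⟩ := hsig₁ j hjO
            obtain ⟨hp2, hd2n, hd2m, _⟩ := hsig₂ j hjO
            obtain ⟨hp3, hd3n, hd3m, _⟩ := hsig₃ j hjO
            obtain ⟨_, _, hd1m', _⟩ := hsig₁ l hlO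
            obtain ⟨_, _, hd2m', _⟩ := hsig₂ l hlO
            obtain ⟨_, _, hd3m', _⟩ := hsig₃ l hlO
            have e12 : σ₁ j ≠ σ₂ j := fun h => hnop i₁ h₁S i₂ h₂S h12 _ hp1 hd1n (h ▸ hd2n)
            have e13 : σ₁ j ≠ σ₃ j := fun h => hnop i₁ h₁S i₃ h₃S h13 _ hp1 hd1n (h ▸ hd3n)
            have e23 : σ₂ j ≠ σ₃ j := fun h => hnop i₂ h₂S i₃ h₃S h23 _ hp2 hd2n (h ▸ hd3n)
            have hbig := hmul3 j l hne _ _ _ hp1 hp2 hp3 e12 e13 e23 hd1m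
              (heq ▸ hd1m') hd2m (by rw [hj2, ← hl2]; exact hd2m') hd3m
              (by rw [hj3, ← hl3]; exact hd3m')
            have h1ge : 2 ≤ σ₁ j := hp1.two_le
            rcases hu with rfl | rfl <;> rw [hj2, hj3, hv] at hbig <;> omega
        · apply Finset.card_le_card_of_injOn σ₁
          · intro j hj; exact hσ₁mem j (Finset.filter_subset _ _ hj)
          · intro j hj l hl heq
            by_contra hne
            have hj' := Finset.mem_filter.mp (Finset.mem_coe.mp hj)
            have hl' := Finset.mem_filter.mp (Finset.mem_coe.mp hl)
            have hjO := hj'.1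
            have hj2 := hj'.2.1
            have hj3 := hj'.2.2
            have hlO := hl'.1
            have hl2 := hl'.2.1
            have hl3 := hl'.2.2
            obtain ⟨hp1, hd1n, hd1m, _⟩ := hsig₁ j hjO
            obtain ⟨hp2, hd2n, hd2m, _⟩ := hsig₂ j hjO
            obtain ⟨hp3, hd3n, hd3m, _⟩ := hsig₃ j hjO
            obtain ⟨_, _, hd1m', _⟩ := hsig₁ l hlO
            obtain ⟨_, _, hd2m', _⟩ := hsig₂ l hlO
            obtain ⟨_, _, hd3m', _⟩ := hsig₃ l hlO
            have e12 : σ₁ j ≠ σ₂ j := fun h => hnop i₁ h₁S i₂ h₂S h12 _ hp1 hd1n (h ▸ hd2n)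
            have e13 : σ₁ j ≠ σ₃ j := fun h => hnop i₁ h₁S i₃ h₃S h13 _ hp1 hd1n (h ▸ hd3n)
            have e23 : σ₂ j ≠ σ₃ j := fun h => hnop i₂ h₂S i₃ h₃S h23 _ hp2 hd2n (h ▸ hd3n)
            have hbig := hmul3 j l hne _ _ _ hp1 hp2 hp3 e12 e13 e23 hd1m
              (heq ▸ hd1m') hd2m (by rw [hj2, ← hl2]; exact hd2m') hd3m
              (by rw [hj3, ← hl3]; exact hd3m')
            have h1ge : 2 ≤ σ₁ j := hp1.two_le
            rcases hu with rfl | rfl <;> rw [hj2, hj3, hv] at hbig <;> omega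
      rcases h3or with h3 | h3
      · -- σ₂ j = 3 is impossible, so O₁ is inside the two fibers with σ₃ = 3
        have hsub : O₁ ⊆ (O.filter (fun j => σ₂ j = 5 ∧ σ₃ j = 3)) ∪
            (O.filter (fun j => σ₂ j = 7 ∧ σ₃ j = 3)) := by
          intro j hj
          have hj' := Finset.mem_filter.mp hj
          have hjO := hj'.1
          obtain ⟨_, hd2n, _, _⟩ := hsig₂ j hjO
          have hne3 : σ₂ j ≠ 3 := fun h => h3 (h ▸ hd2n)
          rcases hj'.2 with ⟨h2e, _⟩ | ⟨h3e, h2e | h2e⟩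
          · exact absurd h2e hne3
          · exact Finset.mem_union_left _ (Finset.mem_filter.mpr ⟨hjO, h2e, h3e⟩)
          · exact Finset.mem_union_right _ (Finset.mem_filter.mpr ⟨hjO, h2e, h3e⟩)
        calc O₁.card ≤ _ := Finset.card_le_card hsub
          _ ≤ _ := Finset.card_union_le _ _
          _ ≤ 2 * pool₁.card := by
            have h5 := (hfib 5 3 (Or.inl rfl) rfl).1
            have h7 := (hfib 7 3 (Or.inr rfl) rfl).1
            omega
      · -- σ₃ j = 3 is impossible, so O₁ is inside the two fibers with σ₂ = 3
        have hsub : O₁ ⊆ (O.filter (fun j => σ₂ j = 3 ∧ σ₃ j = 5)) ∪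
            (O.filter (fun j => σ₂ j = 3 ∧ σ₃ j = 7)) := by
          intro j hj
          have hj' := Finset.mem_filter.mp hj
          have hjO := hj'.1
          obtain ⟨_, hd3n, _, _⟩ := hsig₃ j hjO
          have hne3 : σ₃ j ≠ 3 := fun h => h3 (h ▸ hd3n)
          rcases hj'.2 with ⟨h2e, h3e | h3e⟩ | ⟨h3e, _⟩
          · exact Finset.mem_union_left _ (Finset.mem_filter.mpr ⟨hjO, h2e, h3e⟩)
          · exact Finset.mem_union_right _ (Finset.mem_filter.mpr ⟨hjO, h2e, h3e⟩)
          · exact absurd h3e hne3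
        calc O₁.card ≤ _ := Finset.card_le_card hsub
          _ ≤ _ := Finset.card_union_le _ _
          _ ≤ 2 * pool₁.card := by
            have h5 := (hfib 5 3 (Or.inl rfl) rfl).2
            have h7 := (hfib 7 3 (Or.inr rfl) rfl).2
            omega
    -- final count
    have hcards : S.card + O.card = q + 1 := by
      have h := Finset.card_filter_add_card_filter_not
        (s := (Finset.univ : Finset (Fin (q+1)))) (p := fun i => q ∣ m i)
      rw [Finset.card_univ, Fintype.card_fin] at h
      exact h
    have hfin := hopt pool₁.card pool₂.card pool₃.card hb1 hb2 hb3 hsum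
    omega


theorem minimal_counterexample_ne_24_30 (k : ℕ) (hk : 2 ≤ k)
    (hce : IsCounterexample k)
    (hmin : ∀ k', 2 ≤ k' → IsCounterexample k' → k ≤ k') :
    k ≠ 24 ∧ k ≠ 30 := by
  constructor
  · rintro rfl
    have h23 : IsCounterexample 23 := by
      refine reduce 23 8 (by norm_num) (by norm_num) (by decide) ?_ hce
      intro a b c ha hb hc habc
      have ha' : a ≤ 8 := by omega
      have hb' : b ≤ 8 := by omega
      have hc' : c ≤ 8 := by omega
      interval_cases b <;> interval_cases c <;> omega
    have := hmin 23 (by norm_num) h23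
    omega
  · rintro rfl
    have h29 : IsCounterexample 29 := by
      refine reduce 29 9 (by norm_num) (by norm_num) (by decide) ?_ hce
      intro a b c ha hb hc habc
      have ha' : a ≤ 9 := by omega
      have hb' : b ≤ 9 := by omega
      have hc' : c ≤ 9 := by omega
      interval_cases b <;> interval_cases c <;> omega
    have := hmin 29 (by norm_num) h29
    omega
end

section
/- Let a_1 (mod m_1), …, a_ℓ (mod m_ℓ) be congruence classes (each m_i a positive integer), and let M be a positive multiple of lcm{gcd(m_i, m_j) : 1 ≤ i < j ≤ ℓ}. If Σ_{i=1}^{ℓ} 1/gcd(m_i, M) > 1 (as a sum of rationals), then the classes a_1 (mod m_1), …, a_ℓ (mod m_ℓ) are not pairwise disjoint; that is, there exist i < j such that a_i (mod m_i) and a_j (mod m_j) intersect. -/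
lemma int_crt (m n : ℕ) (a b : ℤ) (h : a ≡ b [ZMOD (Nat.gcd m n : ℤ)]) :
    ∃ x : ℤ, x ≡ a [ZMOD (m : ℤ)] ∧ x ≡ b [ZMOD (n : ℤ)] := by
  have hg : (Nat.gcd m n : ℤ) ∣ a - b := (Int.modEq_iff_dvd.mp h.symm)
  obtain ⟨k, hk⟩ := hg
  set u := Int.gcdA (m : ℤ) (n : ℤ) with hu
  set v := Int.gcdB (m : ℤ) (n : ℤ) with hv
  have hbez : (Nat.gcd m n : ℤ) = (m : ℤ) * u + (n : ℤ) * v := by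
    have := Int.gcd_eq_gcd_ab (m : ℤ) (n : ℤ)
    simpa [Int.gcd_natCast_natCast] using this
  have hk' : a - b = ((m : ℤ) * u + (n : ℤ) * v) * k := by rw [← hbez]; exact hk
  refine ⟨a - (m : ℤ) * u * k, ?_, ?_⟩
  · rw [Int.modEq_iff_dvd]
    exact ⟨u * k, by ring⟩
  · rw [Int.modEq_iff_dvd]
    refine ⟨-(v * k), ?_⟩
    linear_combination -hk'

lemma card_filter_mod (M d r : ℕ) (hd : 0 < d) (hdvd : d ∣ M) (hr : r < d) :
    ((Finset.range M).filter (fun x => x % d = r)).card = M / d := by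
  have : ((Finset.range M).filter (fun x => x % d = r)).card
      = (Finset.range (M / d)).card := by
    apply Finset.card_bij' (fun x _ => x / d) (fun q _ => r + d * q)
    · intro x hx
      simp only [Finset.mem_filter, Finset.mem_range] at hx ⊢
      exact Nat.div_lt_div_of_lt_of_dvd hdvd hx.1
    · intro q hq
      simp only [Finset.mem_range] at hq
      simp only [Finset.mem_filter, Finset.mem_range]
      refine ⟨?_, by rw [Nat.add_mul_mod_self_left, Nat.mod_eq_of_lt hr]⟩
      calc r + d * q < d + d * q := Nat.add_lt_add_right hr _
        _ = d * (q + 1) := by ring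
        _ ≤ d * (M / d) := Nat.mul_le_mul_left d hq
        _ = M := Nat.mul_div_cancel' hdvd
    · intro x hx
      simp only [Finset.mem_filter, Finset.mem_range] at hx
      rw [← hx.2]
      exact Nat.mod_add_div x d
    · intro q hq
      rw [Nat.add_mul_div_left _ _ hd, Nat.div_eq_of_lt hr, Nat.zero_add]
  rw [this, Finset.card_range]

theorem not_disjoint_of_sum_gt_one (ℓ : ℕ) (a : Fin ℓ → ℤ) (m : Fin ℓ → ℕ)
    (hm : ∀ i, 0 < m i) (M : ℕ) (hM : 0 < M)
    (hdvd : ((Finset.univ.filter (fun p : Fin ℓ × Fin ℓ => p.1 < p.2)).lcm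
        (fun p => Nat.gcd (m p.1) (m p.2))) ∣ M)
    (hsum : 1 < ∑ i, (1 : ℚ) / (Nat.gcd (m i) M)) :
    ∃ i j : Fin ℓ, i < j ∧
      (congClass (a i) (m i) ∩ congClass (a j) (m j)).Nonempty := by
  set d : Fin ℓ → ℕ := fun i => Nat.gcd (m i) M with hd
  have hd0 : ∀ i, 0 < d i := fun i => Nat.gcd_pos_of_pos_right _ hM
  have hddvd : ∀ i, d i ∣ M := fun i => Nat.gcd_dvd_right _ _
  set r : Fin ℓ → ℕ := fun i => (a i % (d i : ℤ)).toNat with hr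
  have hrlt : ∀ i, r i < d i := by
    intro i
    have h1 : (0:ℤ) < (d i : ℤ) := by exact_mod_cast hd0 i
    have h2 := Int.emod_lt_of_pos (a i) h1
    have h0 := Int.emod_nonneg (a i) (ne_of_gt h1)
    simp only [hr]
    omega
  have hrmod : ∀ i, (r i : ℤ) ≡ a i [ZMOD (d i : ℤ)] := by
    intro i
    have h1 : (0:ℤ) < (d i : ℤ) := by exact_mod_cast hd0 i
    have h0 := Int.emod_nonneg (a i) (ne_of_gt h1)
    have h2 : (r i : ℤ) = a i % (d i : ℤ) := Int.toNat_of_nonneg h0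
    rw [h2]
    exact Int.emod_emod_of_dvd _ dvd_rfl
  set S : Fin ℓ → Finset ℕ := fun i => (Finset.range M).filter (fun x => x % d i = r i) with hS
  have hScard : ∀ i, (S i).card = M / d i := fun i =>
    card_filter_mod M (d i) (r i) (hd0 i) (hddvd i) (hrlt i)
  have hex : ∃ i j : Fin ℓ, i ≠ j ∧ (S i ∩ S j).Nonempty := by
    by_contra hcon
    push_neg at hcon
    have hdisj : ∀ i ∈ (Finset.univ : Finset (Fin ℓ)), ∀ j ∈ Finset.univ, i ≠ j →
        Disjoint (S i) (S j) := by
      intro i _ j _ hij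
      rw [Finset.disjoint_iff_inter_eq_empty]
      have := hcon i j hij
      exact this
    have hle : ∑ i, (S i).card ≤ M := by
      calc ∑ i, (S i).card = (Finset.univ.biUnion S).card :=
            (Finset.card_biUnion hdisj).symm
        _ ≤ (Finset.range M).card := by
            apply Finset.card_le_card
            intro x hx
            simp only [Finset.mem_biUnion] at hx
            obtain ⟨i, _, hxi⟩ := hx
            exact (Finset.mem_filter.mp hxi).1
        _ = M := Finset.card_range M
    have hgt : (M : ℚ) < ∑ i, ((S i).card : ℚ) := by
      have heq : ∑ i, ((S i).card : ℚ) = ∑ i, (M : ℚ) / (d i : ℚ) := by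
        apply Finset.sum_congr rfl
        intro i _
        rw [hScard i, Nat.cast_div (hddvd i) (by exact_mod_cast (hd0 i).ne')]
      rw [heq]
      calc (M : ℚ) = 1 * M := (one_mul _).symm
        _ < (∑ i, (1 : ℚ) / (d i : ℚ)) * M := by
            apply mul_lt_mul_of_pos_right hsum
            exact_mod_cast hM
        _ = ∑ i, (M : ℚ) / (d i : ℚ) := by
            rw [Finset.sum_mul]
            apply Finset.sum_congr rfl
            intro i _
            field_simp
    have h3 : (M:ℚ) < ((∑ i, (S i).card : ℕ) : ℚ) := by push_cast; exact hgt
    have h4 : M < ∑ i, (S i).card := by exact_mod_cast h3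
    omega
  obtain ⟨i, j, hij, x, hx⟩ := hex
  rw [Finset.mem_inter] at hx
  have key : ∀ p q : Fin ℓ, p < q → x ∈ S p → x ∈ S q →
      ∃ y : ℤ, y ≡ a p [ZMOD (m p : ℤ)] ∧ y ≡ a q [ZMOD (m q : ℤ)] := by
    intro p q hpq hxp hxq
    have hg : Nat.gcd (m p) (m q) ∣ M := by
      refine dvd_trans ?_ hdvd
      have := Finset.dvd_lcm (s := (Finset.univ.filter (fun p : Fin ℓ × Fin ℓ => p.1 < p.2)))
        (f := fun p : Fin ℓ × Fin ℓ => Nat.gcd (m p.1) (m p.2)) (b := (p, q))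
        (by simp [hpq])
      simpa using this
    have hgp : Nat.gcd (m p) (m q) ∣ d p := Nat.dvd_gcd (Nat.gcd_dvd_left _ _) hg
    have hgq : Nat.gcd (m p) (m q) ∣ d q := Nat.dvd_gcd (Nat.gcd_dvd_right _ _) hg
    have hxmod : ∀ t : Fin ℓ, x ∈ S t → (x : ℤ) ≡ a t [ZMOD (d t : ℤ)] := by
      intro t hxt
      have h1 : x % d t = r t := (Finset.mem_filter.mp hxt).2
      have h2 : (x : ℤ) ≡ (r t : ℤ) [ZMOD (d t : ℤ)] := by
        show (x : ℤ) % (d t : ℤ) = (r t : ℤ) % (d t : ℤ)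
        rw [← Int.natCast_mod, ← Int.natCast_mod, h1, Nat.mod_eq_of_lt (hrlt t)]
      exact h2.trans (hrmod t)
    have cp : ((Nat.gcd (m p) (m q) : ℤ)) ∣ (d p : ℤ) := by exact_mod_cast hgp
    have cq : ((Nat.gcd (m p) (m q) : ℤ)) ∣ (d q : ℤ) := by exact_mod_cast hgq
    have hap : a p ≡ a q [ZMOD (Nat.gcd (m p) (m q) : ℤ)] :=
      (((hxmod p hxp).of_dvd cp).symm).trans ((hxmod q hxq).of_dvd cq)
    exact int_crt (m p) (m q) (a p) (a q) hap
  rcases lt_or_gt_of_ne hij with h | h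
  · obtain ⟨y, hy1, hy2⟩ := key i j h hx.1 hx.2
    exact ⟨i, j, h, y, hy1, hy2⟩
  · obtain ⟨y, hy1, hy2⟩ := key j i h hx.2 hx.1
    exact ⟨j, i, h, y, hy1, hy2⟩
end

section
/- If three congruence classes a_1 (mod m_1), a_2 (mod m_2), a_3 (mod m_3) (with each m_i a positive integer) are pairwise disjoint, then there exist i < j with gcd(m_i, m_j) ≥ 3. -/
theorem dccc_three (a : Fin 3 → ℤ) (m : Fin 3 → ℕ) (hm : ∀ i, 0 < m i)
    (hdisj : ∀ i j, i ≠ j → Disjoint (congClass (a i) (m i)) (congClass (a j) (m j))) :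
    ∃ i j : Fin 3, i < j ∧ 3 ≤ Nat.gcd (m i) (m j) := by
  have key : ∀ i j : Fin 3, i ≠ j → ¬ ((Nat.gcd (m i) (m j) : ℤ) ∣ (a i - a j)) := by
    intro i j hij hdvd
    obtain ⟨k, hk⟩ := hdvd
    set u := Int.gcdA (m i) (m j) with hu
    set v := Int.gcdB (m i) (m j) with hv
    have hbez : ((Nat.gcd (m i) (m j) : ℤ)) = m i * u + m j * v := by
      rw [← Int.gcd_natCast_natCast]
      exact Int.gcd_eq_gcd_ab _ _
    set x := a i - k * u * m i with hx
    have h1 : x ∈ congClass (a i) (m i) :=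
      Int.modEq_iff_dvd.mpr ⟨k * u, by rw [hx]; ring⟩
    have h2 : x ∈ congClass (a j) (m j) :=
      Int.modEq_iff_dvd.mpr ⟨-(k * v), by rw [hx]; linear_combination -hk - k * hbez⟩
    exact Set.disjoint_left.mp (hdisj i j hij) h1 h2
  by_contra hc
  push_neg at hc
  have hg : ∀ i j : Fin 3, i ≠ j → Nat.gcd (m i) (m j) = 2 := by
    intro i j hij
    have hlt : Nat.gcd (m i) (m j) < 3 := by
      rcases lt_or_gt_of_ne hij with h' | h'
      · exact hc i j h'
      · rw [Nat.gcd_comm]; exact hc j i h'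
    have hpos : 0 < Nat.gcd (m i) (m j) := Nat.gcd_pos_of_pos_left _ (hm i)
    have hne1 : Nat.gcd (m i) (m j) ≠ 1 := by
      intro he
      have := key i j hij
      rw [he] at this
      simp at this
    omega
  have h2 : ∀ i j : Fin 3, i ≠ j → ¬ ((2 : ℤ) ∣ (a i - a j)) := by
    intro i j hij
    have := key i j hij
    rw [hg i j hij] at this
    exact_mod_cast this
  have h01 := h2 0 1 (by decide)
  have h12 := h2 1 2 (by decide)
  have h02 := h2 0 2 (by decide)
  omega
end

section
/- Assume the minimal-counterexample hypothesis. Then k ≥ 4. -/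
theorem min_ce_k_ge_four (k : ℕ) (a : Fin k → ℤ) (m : Fin k → ℕ)
    (hk : 2 ≤ k)
    (hm : ∀ i, 0 < m i)
    (hdisj : ∀ i j, i ≠ j → Disjoint (congClass (a i) (m i)) (congClass (a j) (m j)))
    (hgcd : ∀ i j, i ≠ j → Nat.gcd (m i) (m j) < k)
    (hkmin : ∀ k', 2 ≤ k' → IsCounterexample k' → k ≤ k')
    (hsummin : ∀ (a' : Fin k → ℤ) (m' : Fin k → ℕ),
      (∀ i, 0 < m' i) →
      (∀ i j, i ≠ j → Disjoint (congClass (a' i) (m' i)) (congClass (a' j) (m' j))) →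
      (∀ i j, i ≠ j → Nat.gcd (m' i) (m' j) < k) →
      ∑ i, m i ≤ ∑ i, m' i) :
    4 ≤ k := by
  -- Step 1: disjointness means the gcd does not divide the difference of residues.
  have hnd : ∀ i j, i ≠ j → ¬ ((Nat.gcd (m i) (m j) : ℤ) ∣ (a i - a j)) := by
    intro i j hij hdvd
    obtain ⟨t, ht⟩ := hdvd
    have hgab : ((Nat.gcd (m i) (m j) : ℤ))
        = (m i) * Int.gcdA (m i) (m j) + (m j) * Int.gcdB (m i) (m j) := by
      simpa [Int.gcd_natCast_natCast] using Int.gcd_eq_gcd_ab (m i : ℤ) (m j : ℤ)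
    set x : ℤ := a i - (m i) * Int.gcdA (m i) (m j) * t with hx
    have hxi : x ∈ congClass (a i) (m i) := by
      show Int.ModEq (m i) x (a i)
      refine (Int.modEq_iff_dvd.mpr ?_)
      exact ⟨Int.gcdA (m i) (m j) * t, by rw [hx]; ring⟩
    have hxj : x ∈ congClass (a j) (m j) := by
      show Int.ModEq (m j) x (a j)
      refine (Int.modEq_iff_dvd.mpr ?_)
      refine ⟨-(Int.gcdB (m i) (m j) * t), ?_⟩
      rw [hx]
      linear_combination -ht - t * hgab
    exact Set.disjoint_left.mp (hdisj i j hij) hxi hxj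
  -- Step 2: every pairwise gcd is at least 2.
  have h2 : ∀ i j, i ≠ j → 2 ≤ Nat.gcd (m i) (m j) := by
    intro i j hij
    have hpos : 0 < Nat.gcd (m i) (m j) := Nat.gcd_pos_of_pos_left _ (hm i)
    rcases Nat.lt_or_ge (Nat.gcd (m i) (m j)) 2 with h | h
    · have h1 : Nat.gcd (m i) (m j) = 1 := by omega
      exact absurd (by rw [h1]; exact ⟨a i - a j, by push_cast; ring⟩) (hnd i j hij)
    · exact h
  -- Step 3: k ≥ 3.
  have hk3 : 3 ≤ k := by
    have hne : (⟨0, by omega⟩ : Fin k) ≠ ⟨1, by omega⟩ := by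
      simp [Fin.ext_iff]
    have := hgcd ⟨0, by omega⟩ ⟨1, by omega⟩ hne
    have := h2 ⟨0, by omega⟩ ⟨1, by omega⟩ hne
    omega
  -- Step 4: rule out k = 3.
  by_contra hlt
  have hk' : k = 3 := by omega
  subst hk'
  -- all pairwise gcds equal 2, so residues are pairwise distinct mod 2.
  have key2 : ∀ i j : Fin 3, i ≠ j → ¬ ((2:ℤ) ∣ (a i - a j)) := by
    intro i j hij
    have hg : Nat.gcd (m i) (m j) = 2 := by
      have := hgcd i j hij; have := h2 i j hij; omega
    have := hnd i j hij
    rw [hg] at this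
    exact_mod_cast this
  have hmod : ∀ i : Fin 3, a i % 2 = 0 ∨ a i % 2 = 1 := fun i => Int.emod_two_eq_zero_or_one (a i)
  have d01 : a 0 % 2 ≠ a 1 % 2 := by
    intro h; exact key2 0 1 (by decide) (Int.ModEq.dvd (Int.ModEq.symm h))
  have d02 : a 0 % 2 ≠ a 2 % 2 := by
    intro h; exact key2 0 2 (by decide) (Int.ModEq.dvd (Int.ModEq.symm h))
  have d12 : a 1 % 2 ≠ a 2 % 2 := by
    intro h; exact key2 1 2 (by decide) (Int.ModEq.dvd (Int.ModEq.symm h))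
  have h0 := hmod 0; have h1 := hmod 1; have h2' := hmod 2
  omega
end

section
/- Assume the minimal-counterexample hypothesis. Then for all i, the modulus m_i divides N; moreover N divides L_k := lcm{1, 2, …, k−1}; and N = lcm{m_1, m_2, …, m_k}. -/
/-- `N = lcm {gcd (m i) (m j) : i < j}`. -/
def Nval (k : ℕ) (m : Fin k → ℕ) : ℕ :=
  (Finset.univ.filter (fun p : Fin k × Fin k => p.1 < p.2)).lcm
    (fun p => Nat.gcd (m p.1) (m p.2))

lemma mem_congClass_iff {a x : ℤ} {m : ℕ} : x ∈ congClass a m ↔ (m : ℤ) ∣ a - x := by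
  simp [congClass, Int.ModEq, Int.emod_emod_of_dvd, Int.modEq_iff_dvd]
  exact Int.modEq_iff_dvd

lemma disj_iff {a b : ℤ} {m n : ℕ} :
    Disjoint (congClass a m) (congClass b n) ↔ ¬ ((Nat.gcd m n : ℤ) ∣ a - b) := by
  constructor
  · intro hd hdvd
    obtain ⟨t, ht⟩ := hdvd
    set u := Int.gcdA m n
    set v := Int.gcdB m n
    have hbez : (Nat.gcd m n : ℤ) = m * u + n * v := by
      simpa [Int.gcd_natCast_natCast] using Int.gcd_eq_gcd_ab (m : ℤ) (n : ℤ)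
    set x : ℤ := a - m * u * t with hx
    have h1 : x ∈ congClass a m := mem_congClass_iff.mpr ⟨u * t, by rw [hx]; ring⟩
    have h2 : x ∈ congClass b n := by
      refine mem_congClass_iff.mpr ⟨-(v * t), ?_⟩
      have : b - x = -(↑(Nat.gcd m n) * t) + m * u * t := by rw [hx, ← ht]; ring
      rw [this, hbez]; ring
    exact Set.disjoint_left.mp hd h1 h2
  · intro hnd
    rw [Set.disjoint_left]
    intro x hx1 hx2
    apply hnd
    have d1 : (Nat.gcd m n : ℤ) ∣ a - x :=
      dvd_trans (Int.natCast_dvd_natCast.mpr (Nat.gcd_dvd_left m n)) (mem_congClass_iff.mp hx1)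
    have d2 : (Nat.gcd m n : ℤ) ∣ b - x :=
      dvd_trans (Int.natCast_dvd_natCast.mpr (Nat.gcd_dvd_right m n)) (mem_congClass_iff.mp hx2)
    have : a - b = (a - x) - (b - x) := by ring
    rw [this]; exact dvd_sub d1 d2

theorem min_ce_dvd_N (k : ℕ) (a : Fin k → ℤ) (m : Fin k → ℕ)
    (hk : 2 ≤ k)
    (hm : ∀ i, 0 < m i)
    (hdisj : ∀ i j, i ≠ j → Disjoint (congClass (a i) (m i)) (congClass (a j) (m j)))
    (hgcd : ∀ i j, i ≠ j → Nat.gcd (m i) (m j) < k)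
    (hkmin : ∀ k', 2 ≤ k' → IsCounterexample k' → k ≤ k')
    (hsummin : ∀ (a' : Fin k → ℤ) (m' : Fin k → ℕ),
      (∀ i, 0 < m' i) →
      (∀ i j, i ≠ j → Disjoint (congClass (a' i) (m' i)) (congClass (a' j) (m' j))) →
      (∀ i j, i ≠ j → Nat.gcd (m' i) (m' j) < k) →
      ∑ i, m i ≤ ∑ i, m' i) :
    (∀ i, m i ∣ Nval k m) ∧ Nval k m ∣ (Finset.Icc 1 (k - 1)).lcm id ∧
      Nval k m = Finset.univ.lcm m := by
  have hNne : Nval k m ≠ 0 := by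
    rw [Nval, Ne, Finset.lcm_eq_zero_iff]
    intro h
    obtain ⟨p, _, hp0⟩ := h
    have h0 : Nat.gcd (m p.1) (m p.2) = 0 := by simpa using hp0
    exact (hm p.1).ne' (Nat.gcd_eq_zero_iff.mp h0).1
  -- key claim
  have key : ∀ i, m i ∣ Nval k m := by
    intro i
    rw [← Nat.factorization_le_iff_dvd (hm i).ne' hNne]
    rw [Finsupp.le_def]
    intro p
    set e := (m i).factorization p with he
    rcases Nat.eq_zero_or_pos e with he0 | hepos
    · simp [← he, he0]
    have hp : p.Prime := by
      by_contra hnp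
      rw [he, Nat.factorization_eq_zero_of_not_prime _ hnp] at hepos
      exact absurd hepos (lt_irrefl 0)
    have hpe_dvd : p ^ e ∣ m i := by rw [he]; exact Nat.ordProj_dvd _ _
    have hp_dvd : p ∣ m i := dvd_trans (dvd_pow_self p hepos.ne') hpe_dvd
    -- main claim: some j ≠ i with p ^ e ∣ gcd (m i) (m j)
    have main : ∃ j, j ≠ i ∧ p ^ e ∣ Nat.gcd (m i) (m j) := by
      by_contra hcon
      push_neg at hcon
      set m' : Fin k → ℕ := Function.update m i (m i / p) with hm'
      have hmi' : 0 < m i / p := Nat.div_pos (Nat.le_of_dvd (hm i) hp_dvd) hp.pos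
      have hfact : (m i / p).factorization = (m i).factorization - Finsupp.single p 1 := by
        rw [Nat.factorization_div hp_dvd, hp.factorization]
      have hgcd_eq : ∀ j, j ≠ i → Nat.gcd (m i / p) (m j) = Nat.gcd (m i) (m j) := by
        intro j hj
        have hfj : (m j).factorization p < e := by
          by_contra hge
          push_neg at hge
          have h1 : p ^ e ∣ m j :=
            (Nat.Prime.pow_dvd_iff_le_factorization hp (hm j).ne').mpr hge
          exact hcon j hj (Nat.dvd_gcd hpe_dvd h1)
        apply Nat.eq_of_factorization_eq
          (Nat.gcd_pos_of_pos_left _ hmi').ne' (Nat.gcd_pos_of_pos_left _ (hm i)).ne'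
        intro q
        rw [Nat.factorization_gcd hmi'.ne' (hm j).ne',
          Nat.factorization_gcd (hm i).ne' (hm j).ne']
        simp only [Finsupp.inf_apply, hfact, Finsupp.tsub_apply]
        rcases eq_or_ne q p with rfl | hq
        · simp only [Finsupp.single_eq_same, ← he]
          omega
        · simp [Finsupp.single_eq_of_ne' (Ne.symm hq)]
      have hpos' : ∀ j, 0 < m' j := by
        intro j
        by_cases hj : j = i
        · rw [hj]; simpa [hm'] using hmi'
        · simpa [hm', Function.update_of_ne hj] using hm j
      have hgcd_eq' : ∀ i' j', i' ≠ j' → Nat.gcd (m' i') (m' j') = Nat.gcd (m i') (m j') := by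
        intro i' j' hne
        by_cases h1 : i' = i
        · have h2 : j' ≠ i := fun h => hne (h1.trans h.symm)
          rw [h1]
          simp only [hm', Function.update_self, Function.update_of_ne h2]
          exact hgcd_eq j' h2
        · by_cases h2 : j' = i
          · rw [h2]
            simp only [hm', Function.update_self, Function.update_of_ne h1]
            rw [Nat.gcd_comm, Nat.gcd_comm (m i')]
            exact hgcd_eq i' h1
          · simp [hm', Function.update_of_ne h1, Function.update_of_ne h2]
      have hdisj' : ∀ i' j', i' ≠ j' →
          Disjoint (congClass (a i') (m' i')) (congClass (a j') (m' j')) := by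
        intro i' j' hne
        rw [disj_iff, hgcd_eq' i' j' hne, ← disj_iff]
        exact hdisj i' j' hne
      have hlt' : ∀ i' j', i' ≠ j' → Nat.gcd (m' i') (m' j') < k := by
        intro i' j' hne
        rw [hgcd_eq' i' j' hne]
        exact hgcd i' j' hne
      have hsum := hsummin a m' hpos' hdisj' hlt'
      have hsum' : ∑ j, m' j < ∑ j, m j := by
        apply Finset.sum_lt_sum
        · intro j _
          by_cases hj : j = i
          · rw [hj]
            simp only [hm', Function.update_self]
            exact Nat.div_le_self _ _
          · simp [hm', Function.update_of_ne hj]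
        · refine ⟨i, Finset.mem_univ i, ?_⟩
          simp only [hm', Function.update_self]
          exact Nat.div_lt_self (hm i) hp.one_lt
      omega
    obtain ⟨j, hj, hdvd⟩ := main
    have hNd : ∀ q : Fin k × Fin k, q.1 < q.2 → Nat.gcd (m q.1) (m q.2) ∣ Nval k m := by
      intro q hq
      unfold Nval
      exact Finset.dvd_lcm (b := q) (by simp [hq])
    have hdvdN : p ^ e ∣ Nval k m := by
      rcases lt_or_gt_of_ne (Ne.symm hj) with hlt | hlt
      · exact dvd_trans hdvd (hNd (i, j) hlt)
      · rw [Nat.gcd_comm] at hdvd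
        exact dvd_trans hdvd (hNd (j, i) hlt)
    exact (Nat.Prime.pow_dvd_iff_le_factorization hp hNne).mp hdvdN
  refine ⟨key, ?_, ?_⟩
  · unfold Nval
    apply Finset.lcm_dvd
    intro q hq
    have hlt : q.1 < q.2 := by simpa using (Finset.mem_filter.mp hq).2
    have hg1 : 1 ≤ Nat.gcd (m q.1) (m q.2) := Nat.gcd_pos_of_pos_left _ (hm q.1)
    have hg2 : Nat.gcd (m q.1) (m q.2) ≤ k - 1 := by
      have := hgcd q.1 q.2 (Fin.ne_of_lt hlt)
      omega
    exact Finset.dvd_lcm (Finset.mem_Icc.mpr ⟨hg1, hg2⟩)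
  · apply Nat.dvd_antisymm
    · unfold Nval
      apply Finset.lcm_dvd
      intro q _
      exact dvd_trans (Nat.gcd_dvd_left _ _) (Finset.dvd_lcm (Finset.mem_univ q.1))
    · exact Finset.lcm_dvd fun j _ => key j
end

section
/- Assume the minimal-counterexample hypothesis. If a prime power q = p^r (p prime, r ≥ 1) divides m_i for some index i, then there exists an index j ≠ i such that q divides m_j. -/
lemma not_disjoint_of_modeq (a b : ℤ) (m n : ℕ)
    (h : ((Nat.gcd m n : ℤ)) ∣ (b - a)) :
    ¬ Disjoint (congClass a m) (congClass b n) := by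
  obtain ⟨t, ht⟩ := h
  rw [Set.not_disjoint_iff]
  set u := Int.gcdA (m : ℤ) (n : ℤ) with hu
  set v := Int.gcdB (m : ℤ) (n : ℤ) with hv
  have hg : (Nat.gcd m n : ℤ) = (m : ℤ) * u + (n : ℤ) * v := by
    have := Int.gcd_eq_gcd_ab (m : ℤ) (n : ℤ)
    simpa [Int.gcd_natCast_natCast] using this
  refine ⟨a + (m : ℤ) * u * t, ?_, ?_⟩
  · show Int.ModEq (m : ℤ) _ a
    exact (Int.modEq_iff_dvd.mpr ⟨-(u * t), by ring⟩)
  · show Int.ModEq (n : ℤ) _ b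
    refine Int.modEq_iff_dvd.mpr ⟨v * t, ?_⟩
    linear_combination ht + t * hg

lemma modeq_of_not_disjoint (a b : ℤ) (m n : ℕ)
    (h : ¬ Disjoint (congClass a m) (congClass b n)) :
    ((Nat.gcd m n : ℤ)) ∣ (b - a) := by
  obtain ⟨x, hx1, hx2⟩ := Set.not_disjoint_iff.mp h
  have h1 : (m : ℤ) ∣ a - x := Int.ModEq.dvd hx1
  have h2 : (n : ℤ) ∣ b - x := Int.ModEq.dvd hx2
  have gm : ((Nat.gcd m n : ℤ)) ∣ (m : ℤ) := Int.natCast_dvd_natCast.mpr (Nat.gcd_dvd_left m n)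
  have gn : ((Nat.gcd m n : ℤ)) ∣ (n : ℤ) := Int.natCast_dvd_natCast.mpr (Nat.gcd_dvd_right m n)
  have : b - a = (b - x) - (a - x) := by ring
  rw [this]
  exact dvd_sub (gn.trans h2) (gm.trans h1)

theorem min_ce_prime_power_shared (k : ℕ) (a : Fin k → ℤ) (m : Fin k → ℕ)
    (hk : 2 ≤ k)
    (hm : ∀ i, 0 < m i)
    (hdisj : ∀ i j, i ≠ j → Disjoint (congClass (a i) (m i)) (congClass (a j) (m j)))
    (hgcd : ∀ i j, i ≠ j → Nat.gcd (m i) (m j) < k)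
    (hkmin : ∀ k', 2 ≤ k' → IsCounterexample k' → k ≤ k')
    (hsummin : ∀ (a' : Fin k → ℤ) (m' : Fin k → ℕ),
      (∀ i, 0 < m' i) →
      (∀ i j, i ≠ j → Disjoint (congClass (a' i) (m' i)) (congClass (a' j) (m' j))) →
      (∀ i j, i ≠ j → Nat.gcd (m' i) (m' j) < k) →
      ∑ i, m i ≤ ∑ i, m' i)
    (p : ℕ) (r : ℕ) (hp : p.Prime) (hr : 1 ≤ r) (i : Fin k) (hdvd : p ^ r ∣ m i) :
    ∃ j, j ≠ i ∧ p ^ r ∣ m j := by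
  by_contra hcon
  push_neg at hcon
  -- hcon : ∀ j, j ≠ i → ¬ p ^ r ∣ m j
  have hpmi : p ∣ m i := (dvd_pow_self p (by omega : r ≠ 0)).trans hdvd
  have hmiq : 0 < m i / p := Nat.div_pos (Nat.le_of_dvd (hm i) hpmi) hp.pos
  -- key divisibility: for j ≠ i, gcd (m i) (m j) ∣ m i / p
  have key : ∀ j, j ≠ i → Nat.gcd (m i) (m j) ∣ m i / p := by
    intro j hj
    set d := Nat.gcd (m i) (m j) with hd
    have hd0 : d ≠ 0 := (Nat.gcd_pos_of_pos_left _ (hm i)).ne'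
    rw [Nat.dvd_div_iff_mul_dvd hpmi]
    set t := d.factorization p with htdef
    have hpt : p ^ t ∣ d := Nat.ordProj_dvd d p
    have he : ¬ p ∣ d / p ^ t := Nat.not_dvd_ordCompl hp hd0
    have hde : p ^ t * (d / p ^ t) = d := Nat.ordProj_mul_ordCompl_eq_self d p
    have htr : t < r := by
      by_contra hge
      exact hcon j hj ((pow_dvd_pow p (by omega)).trans (hpt.trans (Nat.gcd_dvd_right _ _)))
    have h1 : p ^ (t + 1) ∣ m i := (pow_dvd_pow p (by omega)).trans hdvd
    have h2 : (d / p ^ t) ∣ m i := (Nat.ordCompl_dvd d p).trans (Nat.gcd_dvd_left _ _)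
    have hcop : Nat.Coprime (p ^ (t + 1)) (d / p ^ t) :=
      (Nat.Prime.coprime_iff_not_dvd hp).mpr he |>.pow_left _
    have := hcop.mul_dvd_of_dvd_of_dvd h1 h2
    calc p * d = p * (p ^ t * (d / p ^ t)) := by rw [hde]
    _ = p ^ (t + 1) * (d / p ^ t) := by ring
    _ ∣ m i := this
  set m' := Function.update m i (m i / p) with hm'
  have hm'i : m' i = m i / p := Function.update_self i _ m
  have hm'j : ∀ j, j ≠ i → m' j = m j := fun j hj => Function.update_of_ne hj _ m
  have hpos' : ∀ j, 0 < m' j := by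
    intro j
    by_cases hj : j = i
    · subst hj; rw [hm'i]; exact hmiq
    · rw [hm'j j hj]; exact hm j
  -- m' j divides m j for all j
  have hdvd' : ∀ j, m' j ∣ m j := by
    intro j
    by_cases hj : j = i
    · subst hj; rw [hm'i]; exact Nat.div_dvd_of_dvd hpmi
    · rw [hm'j j hj]
  -- old gcd divides new gcd
  have hgdvd : ∀ j l, j ≠ l → Nat.gcd (m j) (m l) ∣ Nat.gcd (m' j) (m' l) := by
    intro j l hjl
    by_cases hj : j = i
    · have hl : l ≠ i := fun h => hjl (hj.trans h.symm)
      rw [hj, hm'i, hm'j l hl]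
      exact Nat.dvd_gcd (key l hl) (Nat.gcd_dvd_right _ _)
    · by_cases hl : l = i
      · rw [hl, hm'i, hm'j j hj]
        exact Nat.dvd_gcd (Nat.gcd_dvd_left _ _)
          ((Nat.gcd_comm (m j) (m i)) ▸ key j hj)
      · rw [hm'j j hj, hm'j l hl]
  have hdisj' : ∀ j l, j ≠ l → Disjoint (congClass (a j) (m' j)) (congClass (a l) (m' l)) := by
    intro j l hjl
    by_contra hnd
    have h1 : ((Nat.gcd (m' j) (m' l) : ℤ)) ∣ (a l - a j) := modeq_of_not_disjoint _ _ _ _ hnd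
    have h2 : ((Nat.gcd (m j) (m l) : ℤ)) ∣ (a l - a j) :=
      (Int.natCast_dvd_natCast.mpr (hgdvd j l hjl)).trans h1
    exact not_disjoint_of_modeq _ _ _ _ h2 (hdisj j l hjl)
  have hgcd' : ∀ j l, j ≠ l → Nat.gcd (m' j) (m' l) < k := by
    intro j l hjl
    have hdiv : Nat.gcd (m' j) (m' l) ∣ Nat.gcd (m j) (m l) :=
      Nat.dvd_gcd ((Nat.gcd_dvd_left _ _).trans (hdvd' j)) ((Nat.gcd_dvd_right _ _).trans (hdvd' l))
    have hpos : 0 < Nat.gcd (m j) (m l) := Nat.gcd_pos_of_pos_left _ (hm j)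
    exact lt_of_le_of_lt (Nat.le_of_dvd hpos hdiv) (hgcd j l hjl)
  have hle := hsummin a m' hpos' hdisj' hgcd'
  have hlt : ∑ j, m' j < ∑ j, m j := by
    apply Finset.sum_lt_sum
    · intro j _; exact Nat.le_of_dvd (hm j) (hdvd' j)
    · exact ⟨i, Finset.mem_univ i, by rw [hm'i]; exact Nat.div_lt_self (hm i) hp.one_lt⟩
  omega
end

section
/- Assume the minimal-counterexample hypothesis. Then at least three of the moduli m_1, …, m_k are multiples of k − 1; that is, there are at least three indices i with (k−1) ∣ m_i. -/
/-- Two disjoint (nonempty) congruence classes have moduli with gcd at least 2,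
by the Chinese Remainder Theorem / Bézout. -/
lemma disjoint_gcd_ge_two (a b : ℤ) (m n : ℕ) (hm : 0 < m)
    (h : Disjoint (congClass a m) (congClass b n)) : 2 ≤ Nat.gcd m n := by
  by_contra hlt
  push_neg at hlt
  have hpos : 0 < Nat.gcd m n := Nat.gcd_pos_of_pos_left n hm
  have hg1 : Nat.gcd m n = 1 := by omega
  have hcop : IsCoprime (m : ℤ) (n : ℤ) := by
    rw [Int.isCoprime_iff_gcd_eq_one, Int.gcd_natCast_natCast]
    exact hg1
  obtain ⟨u, v, huv⟩ := hcop
  set x : ℤ := a * (v * n) + b * (u * m) with hx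
  have hx1 : x ∈ congClass a m := by
    show Int.ModEq (m : ℤ) x a
    rw [Int.modEq_iff_dvd]
    exact ⟨(a - b) * u, by linear_combination -a * huv⟩
  have hx2 : x ∈ congClass b n := by
    show Int.ModEq (n : ℤ) x b
    rw [Int.modEq_iff_dvd]
    exact ⟨(b - a) * v, by linear_combination -b * huv⟩
  exact Set.disjoint_left.mp h hx1 hx2

theorem min_ce_three_multiples (k : ℕ) (a : Fin k → ℤ) (m : Fin k → ℕ)
    (hk : 2 ≤ k)
    (hm : ∀ i, 0 < m i)
    (hdisj : ∀ i j, i ≠ j → Disjoint (congClass (a i) (m i)) (congClass (a j) (m j)))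
    (hgcd : ∀ i j, i ≠ j → Nat.gcd (m i) (m j) < k)
    (hkmin : ∀ k', 2 ≤ k' → IsCounterexample k' → k ≤ k')
    (hsummin : ∀ (a' : Fin k → ℤ) (m' : Fin k → ℕ),
      (∀ i, 0 < m' i) →
      (∀ i j, i ≠ j → Disjoint (congClass (a' i) (m' i)) (congClass (a' j) (m' j))) →
      (∀ i j, i ≠ j → Nat.gcd (m' i) (m' j) < k) →
      ∑ i, m i ≤ ∑ i, m' i) :
    3 ≤ (Finset.univ.filter (fun i => (k - 1) ∣ m i)).card := by
  classical
  -- every pairwise gcd is at least 2, hence k ≥ 3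
  have hge2 : ∀ i j : Fin k, i ≠ j → 2 ≤ Nat.gcd (m i) (m j) := fun i j hij =>
    disjoint_gcd_ge_two (a i) (a j) (m i) (m j) (hm i) (hdisj i j hij)
  have hk3 : 3 ≤ k := by
    have h01 : (⟨0, by omega⟩ : Fin k) ≠ ⟨1, by omega⟩ := by
      simp [Fin.ext_iff]
    have := hge2 _ _ h01
    have := hgcd _ _ h01
    omega
  set S := Finset.univ.filter (fun i => (k - 1) ∣ m i) with hS
  by_contra hcard
  push_neg at hcard
  have hcard2 : S.card ≤ 2 := by omega
  -- choose i₀, an element of S if S is nonempty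
  have hi0 : ∃ i₀ : Fin k, (S.erase i₀).card ≤ 1 := by
    by_cases hne : S.Nonempty
    · obtain ⟨i₀, hi₀⟩ := hne
      exact ⟨i₀, by rw [Finset.card_erase_of_mem hi₀]; omega⟩
    · rw [Finset.not_nonempty_iff_eq_empty] at hne
      exact ⟨⟨0, by omega⟩, by rw [hne]; simp⟩
  obtain ⟨i₀, hi₀⟩ := hi0
  -- removing i₀, all remaining pairwise gcds are < k - 1
  have key : ∀ i j : Fin k, i ≠ j → i ≠ i₀ → j ≠ i₀ →
      Nat.gcd (m i) (m j) < k - 1 := by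
    intro i j hij hi hj
    have h1 := hgcd i j hij
    rcases lt_or_eq_of_le (Nat.le_of_lt_succ (by omega : Nat.gcd (m i) (m j) < (k-1) + 1)) with h | h
    · exact h
    · exfalso
      have hiS : i ∈ S.erase i₀ := by
        refine Finset.mem_erase.mpr ⟨hi, ?_⟩
        simp only [hS, Finset.mem_filter, Finset.mem_univ, true_and]
        exact h ▸ Nat.gcd_dvd_left (m i) (m j)
      have hjS : j ∈ S.erase i₀ := by
        refine Finset.mem_erase.mpr ⟨hj, ?_⟩
        simp only [hS, Finset.mem_filter, Finset.mem_univ, true_and]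
        exact h ▸ Nat.gcd_dvd_right (m i) (m j)
      exact hij (Finset.card_le_one.mp hi₀ i hiS j hjS)
  -- embed Fin (k-1) into Fin k avoiding i₀
  set f : Fin (k - 1) → Fin k :=
    fun p => if (p : ℕ) < (i₀ : ℕ) then ⟨p, by omega⟩ else ⟨(p : ℕ) + 1, by omega⟩ with hf
  have hfne : ∀ p, f p ≠ i₀ := by
    intro p
    simp only [hf]
    split <;> (intro hcon; rw [Fin.ext_iff] at hcon; simp at hcon; omega)
  have hfinj : ∀ p q : Fin (k - 1), p ≠ q → f p ≠ f q := by
    intro p q hpq h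
    have hpq' : (p : ℕ) ≠ (q : ℕ) := fun e => hpq (Fin.ext e)
    simp only [hf] at h
    split at h <;> split at h <;>
      (rw [Fin.ext_iff] at h; simp only at h; omega)
  -- this yields a counterexample for k - 1, contradicting minimality of k
  have hce : IsCounterexample (k - 1) := by
    refine ⟨a ∘ f, m ∘ f, fun p => hm (f p), fun p q hpq => hdisj _ _ (hfinj p q hpq), ?_⟩
    intro p q hpq
    exact key (f p) (f q) (hfinj p q hpq) (hfne p) (hfne q)
  have := hkmin (k - 1) (by omega) hce
  omega
end

section
/- Assume the minimal-counterexample hypothesis. If exactly three of the moduli m_1, …, m_k are multiples of k − 1, then there exist two distinct indices i, j with (k−1) ∤ m_i and (k−1) ∤ m_j such that (k−2) ∣ m_i and (k−2) ∣ m_j. -/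
lemma modeq_not_disjoint {a b : ℤ} {m n : ℕ}
    (h : a ≡ b [ZMOD (Nat.gcd m n : ℤ)]) :
    ¬ Disjoint (congClass a m) (congClass b n) := by
  obtain ⟨t, ht⟩ := Int.ModEq.dvd h
  set u := Int.gcdA (m : ℤ) (n : ℤ) with hu
  set v := Int.gcdB (m : ℤ) (n : ℤ) with hv
  have hbez : (Nat.gcd m n : ℤ) = m * u + n * v := by
    have h2 := Int.gcd_eq_gcd_ab (m : ℤ) (n : ℤ)
    simpa [hu, hv] using h2
  intro hd
  have h1 : a + m * u * t ∈ congClass a m :=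
    Int.modEq_iff_dvd.mpr ⟨-(u * t), by ring⟩
  have h2 : a + m * u * t ∈ congClass b n := by
    refine Int.modEq_iff_dvd.mpr ⟨v * t, ?_⟩
    have : b - (a + m * u * t) = (b - a) - m * u * t := by ring
    rw [this, ht, hbez]; ring
  exact (Set.disjoint_left.mp hd h1) h2

theorem min_ce_exactly_three (k : ℕ) (a : Fin k → ℤ) (m : Fin k → ℕ)
    (hk : 2 ≤ k)
    (hm : ∀ i, 0 < m i)
    (hdisj : ∀ i j, i ≠ j → Disjoint (congClass (a i) (m i)) (congClass (a j) (m j)))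
    (hgcd : ∀ i j, i ≠ j → Nat.gcd (m i) (m j) < k)
    (hkmin : ∀ k', 2 ≤ k' → IsCounterexample k' → k ≤ k')
    (hsummin : ∀ (a' : Fin k → ℤ) (m' : Fin k → ℕ),
      (∀ i, 0 < m' i) →
      (∀ i j, i ≠ j → Disjoint (congClass (a' i) (m' i)) (congClass (a' j) (m' j))) →
      (∀ i j, i ≠ j → Nat.gcd (m' i) (m' j) < k) →
      ∑ i, m i ≤ ∑ i, m' i)
    (h3 : (Finset.univ.filter (fun i => (k - 1) ∣ m i)).card = 3) :
    ∃ i j : Fin k, i ≠ j ∧ ¬ (k - 1) ∣ m i ∧ ¬ (k - 1) ∣ m j ∧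
      (k - 2) ∣ m i ∧ (k - 2) ∣ m j := by
  classical
  set S : Finset (Fin k) := Finset.univ.filter (fun i => (k - 1) ∣ m i) with hS
  have hmemS : ∀ i, i ∈ S ↔ (k - 1) ∣ m i := by
    intro i; simp [hS]
  -- gcd of two moduli in S is exactly k-1
  have hSg : ∀ i j, i ∈ S → j ∈ S → i ≠ j → Nat.gcd (m i) (m j) = k - 1 := by
    intro i j hi hj hij
    have hdvd : (k - 1) ∣ Nat.gcd (m i) (m j) :=
      Nat.dvd_gcd ((hmemS i).mp hi) ((hmemS j).mp hj)
    have hpos : 0 < Nat.gcd (m i) (m j) := Nat.gcd_pos_of_pos_left _ (hm i)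
    have hle := Nat.le_of_dvd hpos hdvd
    have hlt := hgcd i j hij
    omega
  -- extract the three elements of S
  obtain ⟨i1, i2, i3, h12, h13, h23, hSeq⟩ := Finset.card_eq_three.mp h3
  have hi1 : i1 ∈ S := by rw [hSeq]; simp
  have hi2 : i2 ∈ S := by rw [hSeq]; simp
  have hi3 : i3 ∈ S := by rw [hSeq]; simp
  -- k ≥ 3
  have hk3 : 3 ≤ k := by
    by_contra hc
    have hk2 : k = 2 := by omega
    refine modeq_not_disjoint ?_ (hdisj i1 i2 h12)
    rw [hSg i1 i2 hi1 hi2 h12, hk2]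
    exact Int.modEq_one
  -- k ≥ 4, via three distinct residues mod k-1
  haveI : NeZero (k - 1) := ⟨by omega⟩
  have hxne : ∀ i j, i ∈ S → j ∈ S → i ≠ j →
      ((a i : ZMod (k - 1)) ≠ (a j : ZMod (k - 1))) := by
    intro i j hi hj hij heq
    refine modeq_not_disjoint ?_ (hdisj i j hij)
    rw [hSg i j hi hj hij]
    exact (ZMod.intCast_eq_intCast_iff _ _ _).mp heq
  have hk4 : 4 ≤ k := by
    have hcard : ({(a i1 : ZMod (k-1)), (a i2 : ZMod (k-1)), (a i3 : ZMod (k-1))} :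
        Finset (ZMod (k-1))).card = 3 := by
      rw [Finset.card_insert_of_notMem (by
          simp [hxne i1 i2 hi1 hi2 h12, hxne i1 i3 hi1 hi3 h13]),
        Finset.card_insert_of_notMem (by simp [hxne i2 i3 hi2 hi3 h23]),
        Finset.card_singleton]
    have hle : ({(a i1 : ZMod (k-1)), (a i2 : ZMod (k-1)), (a i3 : ZMod (k-1))} :
        Finset (ZMod (k-1))).card ≤ Fintype.card (ZMod (k-1)) := Finset.card_le_univ _
    rw [hcard, ZMod.card] at hle
    omega
  -- no two distinct elements of S are both divisible by k-2
  have hST : ∀ i j, i ∈ S → j ∈ S → i ≠ j → (k - 2) ∣ m i → (k - 2) ∣ m j → False := by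
    intro i j hi hj hij hdi hdj
    have h1 : (k - 2) ∣ Nat.gcd (m i) (m j) := Nat.dvd_gcd hdi hdj
    rw [hSg i j hi hj hij] at h1
    have h2 : (k - 2) ∣ (k - 1) - (k - 2) := Nat.dvd_sub h1 dvd_rfl
    have h3' : (k - 1) - (k - 2) = 1 := by omega
    rw [h3'] at h2
    have := Nat.le_of_dvd one_pos h2
    omega
  by_contra hcon
  push_neg at hcon
  -- hcon : ∀ i j, i ≠ j → ¬(k-1)∣m i → ¬(k-1)∣m j → (k-2)∣m i → ¬(k-2)∣m j
  -- choose s1 s2 ∈ S distinct with: any i ∈ S divisible by k-2 equals s1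
  obtain ⟨s1, s2, hs1, hs2, hs12, hs1T⟩ :
      ∃ s1 s2, s1 ∈ S ∧ s2 ∈ S ∧ s1 ≠ s2 ∧ (∀ i, i ∈ S → (k - 2) ∣ m i → i = s1) := by
    by_cases hex : ∃ s, s ∈ S ∧ (k - 2) ∣ m s
    · obtain ⟨s, hsS, hsT⟩ := hex
      refine ⟨s, if s = i1 then i2 else i1, hsS, ?_, ?_, ?_⟩
      · split <;> assumption
      · split <;> rename_i h
        · rw [h]; exact h12
        · exact h
      · intro i hiS hiT
        by_contra hne
        exact hST i s hiS hsS hne hiT hsT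
    · refine ⟨i1, i2, hi1, hi2, h12, ?_⟩
      intro i hiS hiT
      exact absurd ⟨i, hiS, hiT⟩ hex
  -- the set of remaining indices
  set R : Finset (Fin k) := (Finset.univ.erase s1).erase s2 with hR
  have hmemR : ∀ i, i ∈ R ↔ i ≠ s2 ∧ i ≠ s1 := by
    intro i; simp [hR]
  have hRcard : R.card = k - 2 := by
    rw [hR, Finset.card_erase_of_mem, Finset.card_erase_of_mem (Finset.mem_univ _)]
    · simp; omega
    · exact Finset.mem_erase.mpr ⟨fun h => hs12 h.symm, Finset.mem_univ _⟩
  -- key: remaining gcds are < k - 2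
  have hkey : ∀ i j, i ∈ R → j ∈ R → i ≠ j → Nat.gcd (m i) (m j) < k - 2 := by
    intro i j hiR hjR hij
    obtain ⟨hi2', hi1'⟩ := (hmemR i).mp hiR
    obtain ⟨hj2', hj1'⟩ := (hmemR j).mp hjR
    have hlt := hgcd i j hij
    by_contra hge
    push_neg at hge
    set g := Nat.gcd (m i) (m j) with hg
    have hgi : g ∣ m i := Nat.gcd_dvd_left _ _
    have hgj : g ∣ m j := Nat.gcd_dvd_right _ _
    rcases (by omega : g = k - 1 ∨ g = k - 2) with hgk | hgk
    · -- both i, j in S, but only one S element remains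
      rw [hgk] at hgi hgj
      have hiS : i ∈ S := (hmemS i).mpr hgi
      have hjS : j ∈ S := (hmemS j).mpr hgj
      -- i, j ∈ {i1,i2,i3} \ {s1,s2} which has one element
      have hW : ((S.erase s1).erase s2).card = 1 := by
        rw [Finset.card_erase_of_mem, Finset.card_erase_of_mem hs1, h3]
        · exact Finset.mem_erase.mpr ⟨fun h => hs12 h.symm, hs2⟩
      have hiW : i ∈ (S.erase s1).erase s2 :=
        Finset.mem_erase.mpr ⟨hi2', Finset.mem_erase.mpr ⟨hi1', hiS⟩⟩
      have hjW : j ∈ (S.erase s1).erase s2 :=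
        Finset.mem_erase.mpr ⟨hj2', Finset.mem_erase.mpr ⟨hj1', hjS⟩⟩
      exact hij (Finset.card_le_one.mp (le_of_eq hW) _ hiW _ hjW)
    · -- both i, j divisible by k-2, neither in S (else = s1), so hcon applies
      rw [hgk] at hgi hgj
      have hiNS : ¬ (k - 1) ∣ m i := fun h => hi1' (hs1T i ((hmemS i).mpr h) hgi)
      have hjNS : ¬ (k - 1) ∣ m j := fun h => hj1' (hs1T j ((hmemS j).mpr h) hgj)
      exact hcon i j hij hiNS hjNS hgi hgj
  -- build a counterexample for k - 2
  have hce : IsCounterexample (k - 2) := by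
    have e := R.equivFinOfCardEq hRcard
    refine ⟨fun p => a (e.symm p : Fin k), fun p => m (e.symm p : Fin k), ?_, ?_, ?_⟩
    · intro p; exact hm _
    · intro p q hpq
      refine hdisj _ _ ?_
      intro h
      exact hpq (e.symm.injective (Subtype.ext h))
    · intro p q hpq
      refine hkey _ _ (e.symm p).2 (e.symm q).2 ?_
      intro h
      exact hpq (e.symm.injective (Subtype.ext h))
  have := hkmin (k - 2) (by omega) hce
  omega
end

section
/- Assume the minimal-counterexample hypothesis. Then for every subset {h_1, …, h_ℓ} of {m_1, …, m_k} with ℓ ≥ 2, and every positive multiple M of lcm{gcd(h_i, h_j) : 1 ≤ i < j ≤ ℓ}, one has Σ_{i=1}^{ℓ} 1/gcd(h_i, M) ≤ 1 (as a sum of rationals). -/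
lemma count_res (M d : ℕ) (hd : 0 < d) (hdM : d ∣ M) (a : ℤ) :
    ((Finset.range M).filter (fun x : ℕ => Int.ModEq (d:ℤ) (x:ℤ) a)).card = M / d := by
  set r : ℕ := (a % (d:ℤ)).toNat with hr
  have hdz : (0:ℤ) < (d:ℤ) := by exact_mod_cast hd
  have hrd : (r : ℤ) = a % (d:ℤ) := Int.toNat_of_nonneg (Int.emod_nonneg a hdz.ne')
  have hrlt : r < d := by
    have h1 := Int.emod_lt_of_pos a hdz
    rw [← hrd] at h1
    exact_mod_cast h1
  have key : ∀ x : ℕ, Int.ModEq (d:ℤ) (x:ℤ) a ↔ x % d = r := by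
    intro x
    unfold Int.ModEq
    rw [← hrd]
    constructor
    · intro h
      have : ((x % d : ℕ) : ℤ) = (r : ℤ) := by rw [Int.natCast_mod]; exact h
      exact_mod_cast this
    · intro h
      rw [← Int.natCast_mod, h]
  have himg : (Finset.range M).filter (fun x : ℕ => Int.ModEq (d:ℤ) (x:ℤ) a)
      = (Finset.range (M/d)).image (fun j => r + d * j) := by
    ext x
    simp only [Finset.mem_filter, Finset.mem_range, Finset.mem_image, key]
    constructor
    · rintro ⟨hx, hmod⟩
      refine ⟨x / d, Nat.div_lt_div_of_lt_of_dvd hdM hx, ?_⟩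
      have := Nat.div_add_mod x d
      omega
    · rintro ⟨j, hj, rfl⟩
      have hMd : d * (M / d) = M := Nat.mul_div_cancel' hdM
      constructor
      · have : j + 1 ≤ M / d := hj
        nlinarith
      · simp [Nat.add_mul_mod_self_left, Nat.mod_eq_of_lt hrlt]
  rw [himg, Finset.card_image_of_injective _ (fun j1 j2 h => by have h' : r + d * j1 = r + d * j2 := h; exact Nat.eq_of_mul_eq_mul_left hd (by omega) : Function.Injective (fun j => r + d * j)), Finset.card_range]

lemma crt_int (m n : ℕ) (a b : ℤ) (h : (Nat.gcd m n : ℤ) ∣ a - b) :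
    ∃ y : ℤ, Int.ModEq (m:ℤ) y a ∧ Int.ModEq (n:ℤ) y b := by
  obtain ⟨t, ht⟩ := h
  refine ⟨a - (m:ℤ) * Nat.gcdA m n * t, ?_, ?_⟩
  · rw [Int.modEq_iff_dvd]
    exact ⟨Nat.gcdA m n * t, by ring⟩
  · rw [Int.modEq_iff_dvd]
    have hbez : (Nat.gcd m n : ℤ) = m * Nat.gcdA m n + n * Nat.gcdB m n := Nat.gcd_eq_gcd_ab m n
    refine ⟨-(Nat.gcdB m n * t), ?_⟩
    have : b - (a - (m:ℤ) * Nat.gcdA m n * t) = (m:ℤ) * Nat.gcdA m n * t - (a - b) := by ring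
    rw [this, ht, hbez]
    ring

theorem min_ce_subset_test (k : ℕ) (a : Fin k → ℤ) (m : Fin k → ℕ)
    (hk : 2 ≤ k)
    (hm : ∀ i, 0 < m i)
    (hdisj : ∀ i j, i ≠ j → Disjoint (congClass (a i) (m i)) (congClass (a j) (m j)))
    (hgcd : ∀ i j, i ≠ j → Nat.gcd (m i) (m j) < k)
    (hkmin : ∀ k', 2 ≤ k' → IsCounterexample k' → k ≤ k')
    (hsummin : ∀ (a' : Fin k → ℤ) (m' : Fin k → ℕ),
      (∀ i, 0 < m' i) →
      (∀ i j, i ≠ j → Disjoint (congClass (a' i) (m' i)) (congClass (a' j) (m' j))) →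
      (∀ i j, i ≠ j → Nat.gcd (m' i) (m' j) < k) →
      ∑ i, m i ≤ ∑ i, m' i)
    (s : Finset (Fin k)) (hs : 2 ≤ s.card) (M : ℕ) (hM : 0 < M)
    (hdvd : (((s ×ˢ s).filter (fun p => p.1 < p.2)).lcm
        (fun p => Nat.gcd (m p.1) (m p.2))) ∣ M) :
    ∑ i ∈ s, (1 : ℚ) / (Nat.gcd (m i) M) ≤ 1 := by
  set d : Fin k → ℕ := fun i => Nat.gcd (m i) M with hd
  have hdpos : ∀ i, 0 < d i := fun i => Nat.gcd_pos_of_pos_right _ hM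
  have hdM : ∀ i, d i ∣ M := fun i => Nat.gcd_dvd_right _ _
  -- pairwise gcds divide M
  have hgM : ∀ i ∈ s, ∀ j ∈ s, i ≠ j → (Nat.gcd (m i) (m j)) ∣ M := by
    intro i hi j hj hij
    rcases lt_or_gt_of_ne hij with h | h
    · have hmem : ((i, j) : Fin k × Fin k) ∈ (s ×ˢ s).filter (fun p => p.1 < p.2) := by
        simp only [Finset.mem_filter, Finset.mem_product]
        exact ⟨⟨hi, hj⟩, h⟩
      exact dvd_trans (Finset.dvd_lcm (f := fun p : Fin k × Fin k => Nat.gcd (m p.1) (m p.2)) hmem) hdvd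
    · have hmem : ((j, i) : Fin k × Fin k) ∈ (s ×ˢ s).filter (fun p => p.1 < p.2) := by
        simp only [Finset.mem_filter, Finset.mem_product]
        exact ⟨⟨hj, hi⟩, h⟩
      rw [Nat.gcd_comm]
      exact dvd_trans (Finset.dvd_lcm (f := fun p : Fin k × Fin k => Nat.gcd (m p.1) (m p.2)) hmem) hdvd
  set T : Fin k → Finset ℕ := fun i => (Finset.range M).filter
      (fun x : ℕ => Int.ModEq ((d i : ℕ) : ℤ) (x : ℤ) (a i)) with hT
  have hTcard : ∀ i, (T i).card = M / d i := fun i => count_res M (d i) (hdpos i) (hdM i) (a i)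
  have hTdisj : ∀ i ∈ s, ∀ j ∈ s, i ≠ j → Disjoint (T i) (T j) := by
    intro i hi j hj hij
    rw [Finset.disjoint_left]
    intro x hxi hxj
    simp only [hT, Finset.mem_filter] at hxi hxj
    have h1 : Int.ModEq (d i : ℤ) (x : ℤ) (a i) := hxi.2
    have h2 : Int.ModEq (d j : ℤ) (x : ℤ) (a j) := hxj.2
    set g : ℕ := Nat.gcd (m i) (m j) with hg
    have hgi : g ∣ d i := Nat.dvd_gcd (Nat.gcd_dvd_left _ _) (hgM i hi j hj hij)
    have hgj : g ∣ d j := Nat.dvd_gcd (Nat.gcd_dvd_right _ _) (hgM i hi j hj hij)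
    have hdab : (g : ℤ) ∣ a i - a j := by
      have d1 : (g : ℤ) ∣ a i - x :=
        dvd_trans (Int.natCast_dvd_natCast.mpr hgi) (Int.ModEq.dvd h1)
      have d2 : (g : ℤ) ∣ x - a j :=
        dvd_trans (Int.natCast_dvd_natCast.mpr hgj) (Int.ModEq.dvd h2.symm)
      have : a i - a j = (a i - x) + (x - a j) := by ring
      rw [this]; exact dvd_add d1 d2
    obtain ⟨y, hy1, hy2⟩ := crt_int (m i) (m j) (a i) (a j) hdab
    exact Set.disjoint_left.mp (hdisj i j hij) hy1 hy2
  have hsumcard : ∑ i ∈ s, (T i).card ≤ M := by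
    rw [← Finset.card_biUnion hTdisj]
    calc (s.biUnion T).card ≤ (Finset.range M).card := by
          apply Finset.card_le_card
          intro x hx
          obtain ⟨i, _, hxi⟩ := Finset.mem_biUnion.mp hx
          exact (Finset.mem_filter.mp hxi).1
      _ = M := Finset.card_range M
  have hrw : ∀ i ∈ s, (1 : ℚ) / (d i) = ((M / d i : ℕ) : ℚ) / (M : ℚ) := by
    intro i _
    rw [Nat.cast_div (hdM i) (by exact_mod_cast (hdpos i).ne'),
      div_right_comm, div_self (by exact_mod_cast hM.ne' : (M:ℚ) ≠ 0)]
  calc ∑ i ∈ s, (1 : ℚ) / (Nat.gcd (m i) M)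
      = ∑ i ∈ s, ((M / d i : ℕ) : ℚ) / (M : ℚ) := Finset.sum_congr rfl hrw
    _ = ((∑ i ∈ s, (M / d i : ℕ)) : ℚ) / (M : ℚ) := by
        rw [Finset.sum_div]
    _ ≤ (M : ℚ) / (M : ℚ) := by
        have h2 : ∑ i ∈ s, (M / d i) ≤ M := by
          calc ∑ i ∈ s, M / d i = ∑ i ∈ s, (T i).card :=
                Finset.sum_congr rfl (fun i _ => (hTcard i).symm)
            _ ≤ M := hsumcard
        gcongr
        exact_mod_cast h2
    _ = 1 := div_self (by exact_mod_cast hM.ne')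
end

section
/- Assume the minimal-counterexample hypothesis. Then k is not an element of {8, 12, 14, 18, 20, 24, 30}. -/
lemma exists_common (m n : ℕ) (a b : ℤ)
    (h : a ≡ b [ZMOD ((Nat.gcd m n : ℕ) : ℤ)]) :
    ∃ x : ℤ, x ≡ a [ZMOD (m : ℤ)] ∧ x ≡ b [ZMOD (n : ℤ)] := by
  have hd : ((Nat.gcd m n : ℕ) : ℤ) ∣ (b - a) := Int.ModEq.dvd h
  obtain ⟨c, hc⟩ := hd
  have hab : ((Nat.gcd m n : ℕ) : ℤ) = (m : ℤ) * Int.gcdA m n + (n : ℤ) * Int.gcdB m n := by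
    rw [← Int.gcd_natCast_natCast, Int.gcd_eq_gcd_ab]
  refine ⟨a + (m : ℤ) * Int.gcdA m n * c, ?_, ?_⟩
  · rw [Int.modEq_iff_dvd]
    exact ⟨-(Int.gcdA m n * c), by ring⟩
  · rw [Int.modEq_iff_dvd]
    refine ⟨Int.gcdB m n * c, ?_⟩
    have h2 : b - a = ((m : ℤ) * Int.gcdA m n + (n : ℤ) * Int.gcdB m n) * c := by
      rw [← hab]; exact hc
    linear_combination h2

lemma numeric_bound (b₁ b₂ b₃ : ℕ) (h₁ : 1 ≤ b₁) (h₂ : 1 ≤ b₂) (h₃ : 1 ≤ b₃)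
    (h : b₁ + b₂ + b₃ ≤ 9) : b₁ * b₂ + 2 * b₃ ≤ 2 * (b₁ + b₂ + b₃) := by
  have hb1 : b₁ ≤ 7 := by omega
  have hb2 : b₂ ≤ 7 := by omega
  interval_cases b₁ <;> interval_cases b₂ <;> omega

lemma three_of_card {α : Type*} [DecidableEq α] (s : Finset α) (h : 3 ≤ s.card) :
    ∃ x ∈ s, ∃ y ∈ s, ∃ z ∈ s, x ≠ y ∧ x ≠ z ∧ y ≠ z := by
  obtain ⟨x, hx⟩ := Finset.card_pos.1 (by omega : 0 < s.card)
  have h1 : 2 ≤ (s.erase x).card := by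
    have := Finset.card_erase_of_mem hx; omega
  obtain ⟨y, hy⟩ := Finset.card_pos.1 (by omega : 0 < (s.erase x).card)
  have h2 : 1 ≤ ((s.erase x).erase y).card := by
    have := Finset.card_erase_of_mem hy; omega
  obtain ⟨z, hz⟩ := Finset.card_pos.1 (by omega : 0 < ((s.erase x).erase y).card)
  have hyx : y ≠ x := (Finset.mem_erase.1 hy).1
  have hzy : z ≠ y := (Finset.mem_erase.1 hz).1
  have hzx : z ≠ x := (Finset.mem_erase.1 (Finset.mem_erase.1 hz).2).1
  exact ⟨x, hx, y, (Finset.mem_erase.1 hy).2, z,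
    (Finset.mem_erase.1 (Finset.mem_erase.1 hz).2).2, hyx.symm, hzx.symm, hzy.symm⟩

lemma prime_ge_five (v : ℕ) (hv : v.Prime) (h2 : v ≠ 2) (h3 : v ≠ 3) : 5 ≤ v := by
  have h1 := hv.two_le
  have h4 : v ≠ 4 := by rintro rfl; norm_num at hv
  omega

lemma prime_ge_seven (v : ℕ) (hv : v.Prime) (h2 : v ≠ 2) (h3 : v ≠ 3) (h5 : v ≠ 5) : 7 ≤ v := by
  have h1 := prime_ge_five v hv h2 h3
  have h6 : v ≠ 6 := by rintro rfl; norm_num at hv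
  omega

lemma odd_prime_pair_classify (u v : ℕ) (hu : u.Prime) (hv : v.Prime)
    (hu2 : u ≠ 2) (hv2 : v ≠ 2) (huv : u ≠ v) (hle : u * v ≤ 29) :
    (u = 3 ∧ (v = 5 ∨ v = 7)) ∨ (v = 3 ∧ (u = 5 ∨ u = 7)) := by
  have h3u : 2 ≤ u := hu.two_le
  have h3v : 2 ≤ v := hv.two_le
  rcases eq_or_ne u 3 with rfl | hu3
  · left
    refine ⟨rfl, ?_⟩
    have hv3 : v ≠ 3 := fun h => huv h.symm
    have h5 : 5 ≤ v := prime_ge_five v hv hv2 hv3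
    have h9 : v ≤ 9 := by omega
    have h6 : v ≠ 6 := by rintro rfl; norm_num at hv
    have h8 : v ≠ 8 := by rintro rfl; norm_num at hv
    have h9' : v ≠ 9 := by rintro rfl; norm_num at hv
    omega
  rcases eq_or_ne v 3 with rfl | hv3
  · right
    refine ⟨rfl, ?_⟩
    have h5 : 5 ≤ u := prime_ge_five u hu hu2 hu3
    have h9 : u ≤ 9 := by omega
    have h6 : u ≠ 6 := by rintro rfl; norm_num at hu
    have h8 : u ≠ 8 := by rintro rfl; norm_num at hu
    have h9' : u ≠ 9 := by rintro rfl; norm_num at hu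
    omega
  · exfalso
    have h5u : 5 ≤ u := prime_ge_five u hu hu2 hu3
    have h5v : 5 ≤ v := prime_ge_five v hv hv2 hv3
    rcases Nat.lt_or_ge u v with h | h
    · have h7 : 7 ≤ v := prime_ge_seven v hv hv2 hv3 (by omega)
      have := Nat.mul_le_mul h5u h7
      omega
    · have huv' : v ≠ u := fun hh => huv hh.symm
      have h7 : 7 ≤ u := prime_ge_seven u hu hu2 hu3 (by omega)
      have := Nat.mul_le_mul h7 h5v
      omega

theorem key (p : ℕ) (hp : p.Prime) (π : ℕ)
    (hπ : ((Finset.range p).filter Nat.Prime).card = π)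
    (hπ9 : π ≤ 9) (h3π : 3 * π < p + 3) (hp29 : p ≤ 29)
    (a : Fin (p+1) → ℤ) (m : Fin (p+1) → ℕ)
    (hm : ∀ i, 0 < m i)
    (hdisj : ∀ i j, i ≠ j → Disjoint (congClass (a i) (m i)) (congClass (a j) (m j)))
    (hgcd : ∀ i j, i ≠ j → Nat.gcd (m i) (m j) < p+1)
    (hnce : ¬ IsCounterexample p) : False := by
  classical
  -- pairwise incongruence mod the gcd
  have hinc : ∀ i j : Fin (p+1), i ≠ j →
      ¬ (a i ≡ a j [ZMOD ((Nat.gcd (m i) (m j) : ℕ) : ℤ)]) := by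
    intro i j hij hcong
    obtain ⟨x, hx1, hx2⟩ := exists_common (m i) (m j) (a i) (a j) hcong
    exact Set.disjoint_left.1 (hdisj i j hij) hx1 hx2
  have hgcd2 : ∀ i j : Fin (p+1), i ≠ j → 2 ≤ Nat.gcd (m i) (m j) := by
    intro i j hij
    have h0 : 0 < Nat.gcd (m i) (m j) := Nat.gcd_pos_of_pos_left _ (hm i)
    have h1 : Nat.gcd (m i) (m j) ≠ 1 := by
      intro h1
      apply hinc i j hij
      rw [h1]
      exact_mod_cast Int.modEq_one
    omega
  set S : Finset (Fin (p+1)) := Finset.univ.filter (fun i => p ∣ m i) with hSdef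
  set T : Finset (Fin (p+1)) := Finset.univ.filter (fun i => ¬ p ∣ m i) with hTdef
  have hST : S.card + T.card = p + 1 := by
    rw [hSdef, hTdef, Finset.card_filter_add_card_filter_not]
    simp
  have hSTne : ∀ i ∈ S, ∀ j ∈ T, i ≠ j := by
    intro i hi j hj hij
    rw [hSdef, Finset.mem_filter] at hi
    rw [hTdef, Finset.mem_filter] at hj
    exact hj.2 (hij ▸ hi.2)
  have hgcdS : ∀ i ∈ S, ∀ j ∈ S, i ≠ j → Nat.gcd (m i) (m j) = p := by
    intro i hi j hj hij
    rw [hSdef, Finset.mem_filter] at hi hj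
    have h1 : p ∣ Nat.gcd (m i) (m j) := Nat.dvd_gcd hi.2 hj.2
    have h2 : p ≤ Nat.gcd (m i) (m j) :=
      Nat.le_of_dvd (Nat.gcd_pos_of_pos_left _ (hm i)) h1
    have h3 := hgcd i j hij
    omega
  -- |S| ≤ p via distinct residues mod p
  haveI : NeZero p := ⟨hp.pos.ne'⟩
  have hScard : S.card ≤ p := by
    have : S.card ≤ (Finset.univ : Finset (ZMod p)).card := by
      apply Finset.card_le_card_of_injOn (fun i => ((a i : ZMod p)))
        (fun i _ => Finset.mem_univ _)
      intro i hi j hj hcast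
      by_contra hij
      apply hinc i j hij
      rw [hgcdS i hi j hj hij]
      exact (ZMod.intCast_eq_intCast_iff _ _ _).1 hcast
    simpa [ZMod.card] using this
  -- 3 ≤ |S| : otherwise delete one vertex and get a (p)-counterexample
  have hs3 : 3 ≤ S.card := by
    by_contra hlt
    push_neg at hlt
    have hex : ∃ i0 : Fin (p+1), ∀ i j : Fin (p+1),
        i ≠ i0 → j ≠ i0 → i ≠ j → Nat.gcd (m i) (m j) ≠ p := by
      have hmemS : ∀ i j : Fin (p+1), Nat.gcd (m i) (m j) = p → i ∈ S := by
        intro i j hg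
        rw [hSdef, Finset.mem_filter]
        exact ⟨Finset.mem_univ _, hg ▸ Nat.gcd_dvd_left _ _⟩
      have hmemS' : ∀ i j : Fin (p+1), Nat.gcd (m i) (m j) = p → j ∈ S := by
        intro i j hg
        rw [hSdef, Finset.mem_filter]
        exact ⟨Finset.mem_univ _, hg ▸ Nat.gcd_dvd_right _ _⟩
      rcases S.eq_empty_or_nonempty with hSe | ⟨i0, hi0mem⟩
      · refine ⟨⟨0, by omega⟩, fun i j _ _ _ hg => ?_⟩
        have := hmemS i j hg
        rw [hSe] at this
        exact absurd this (Finset.notMem_empty i)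
      · refine ⟨i0, fun i j hi hj hij hg => ?_⟩
        have hiS := hmemS i j hg
        have hjS := hmemS' i j hg
        have hsub : ({i, j, i0} : Finset (Fin (p+1))) ⊆ S := by
          intro x hx
          simp only [Finset.mem_insert, Finset.mem_singleton] at hx
          rcases hx with rfl | rfl | rfl
          · exact hiS
          · exact hjS
          · exact hi0mem
        have hc3 : ({i, j, i0} : Finset (Fin (p+1))).card = 3 := by
          rw [Finset.card_insert_of_notMem (by simp [hij, hi]),
            Finset.card_insert_of_notMem (by simp [hj]), Finset.card_singleton]
        have := Finset.card_le_card hsub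
        omega
    obtain ⟨i0, hi0⟩ := hex
    apply hnce
    refine ⟨fun i => a (i0.succAbove i), fun i => m (i0.succAbove i),
      fun i => hm _, ?_, ?_⟩
    · intro i j hij
      exact hdisj _ _ (Fin.succAbove_right_injective.ne hij)
    · intro i j hij
      have hne : i0.succAbove i ≠ i0.succAbove j := Fin.succAbove_right_injective.ne hij
      have h1 := hgcd _ _ hne
      have h2 := hi0 _ _ (Fin.succAbove_ne i0 i) (Fin.succAbove_ne i0 j) hne
      show Nat.gcd (m (i0.succAbove i)) (m (i0.succAbove j)) < p
      omega
  -- T nonempty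
  have hTne : T.Nonempty := by
    rw [← Finset.card_pos]; omega
  obtain ⟨j0, hj0⟩ := hTne
  -- the prime labels
  set q : Fin (p+1) → Fin (p+1) → ℕ := fun i j => (Nat.gcd (m i) (m j)).minFac with hqdef
  have hqfacts : ∀ i ∈ S, ∀ j ∈ T, (q i j).Prime ∧ q i j ∣ m i ∧ q i j ∣ m j ∧ q i j < p := by
    intro i hi j hj
    have hij := hSTne i hi j hj
    have h2 := hgcd2 i j hij
    have hprime : (q i j).Prime := Nat.minFac_prime (by omega)
    have hdvd : q i j ∣ Nat.gcd (m i) (m j) := Nat.minFac_dvd _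
    have hdm1 : q i j ∣ m i := hdvd.trans (Nat.gcd_dvd_left _ _)
    have hdm2 : q i j ∣ m j := hdvd.trans (Nat.gcd_dvd_right _ _)
    have hqle : q i j ≤ Nat.gcd (m i) (m j) := Nat.minFac_le (by omega)
    have hqnep : q i j ≠ p := by
      intro hqp
      rw [hTdef, Finset.mem_filter] at hj
      exact hj.2 (hqp ▸ hdm2)
    have := hgcd i j hij
    exact ⟨hprime, hdm1, hdm2, by omega⟩
  -- cross-coordinate distinctness
  have hcross : ∀ i ∈ S, ∀ i' ∈ S, i ≠ i' → ∀ j ∈ T, ∀ j' ∈ T, q i j ≠ q i' j' := by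
    intro i hi i' hi' hii' j hj j' hj' heq
    have h1 := hqfacts i hi j hj
    have h2 := hqfacts i' hi' j' hj'
    have hdg : q i j ∣ Nat.gcd (m i) (m i') :=
      Nat.dvd_gcd h1.2.1 (heq ▸ h2.2.1)
    rw [hgcdS i hi i' hi' hii'] at hdg
    have := (Nat.prime_dvd_prime_iff_eq h1.1 hp).1 hdg
    omega
  -- s ≤ π via disjoint palettes
  set P : Finset ℕ := (Finset.range p).filter Nat.Prime with hPdef
  have hqmemP : ∀ i ∈ S, ∀ j ∈ T, q i j ∈ P := by
    intro i hi j hj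
    obtain ⟨h1, _, _, h4⟩ := hqfacts i hi j hj
    rw [hPdef, Finset.mem_filter, Finset.mem_range]
    exact ⟨h4, h1⟩
  have hsπ : S.card ≤ π := by
    have hdisjA : (S : Set (Fin (p+1))).PairwiseDisjoint
        (fun i => T.image (fun j => q i j)) := by
      intro i hi i' hi' hii'
      simp only [Function.onFun]
      rw [Finset.disjoint_left]
      intro x hx hx'
      obtain ⟨j, hj, hqj⟩ := Finset.mem_image.1 hx
      obtain ⟨j', hj', hqj'⟩ := Finset.mem_image.1 hx'
      exact hcross i hi i' hi' hii' j hj j' hj' (hqj.trans hqj'.symm)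
    have hcardb := Finset.card_biUnion hdisjA
    have hsub : S.biUnion (fun i => T.image (fun j => q i j)) ⊆ P := by
      intro x hx
      obtain ⟨i, hi, hx2⟩ := Finset.mem_biUnion.1 hx
      obtain ⟨j, hj, hqj⟩ := Finset.mem_image.1 hx2
      exact hqj ▸ hqmemP i hi j hj
    have hle := Finset.card_le_card hsub
    rw [hcardb] at hle
    have hone : ∀ i ∈ S, 1 ≤ (T.image (fun j => q i j)).card := by
      intro i hi
      rw [Nat.one_le_iff_ne_zero, ← Nat.pos_iff_ne_zero, Finset.card_pos]
      exact ⟨q i j0, Finset.mem_image.2 ⟨j0, hj0, rfl⟩⟩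
    calc S.card = ∑ _i ∈ S, 1 := by simp
    _ ≤ ∑ i ∈ S, (T.image (fun j => q i j)).card := Finset.sum_le_sum hone
    _ ≤ P.card := hle
    _ = π := hπ
  -- choose three distinct elements of S, with the "2-palette" one (if any) third
  obtain ⟨x, hxS, y, hyS, z, hzS, hxy, hxz, hyz⟩ := three_of_card S hs3
  have hQatmost : ∀ u ∈ S, ∀ v ∈ S, u ≠ v →
      (2 ∈ T.image (fun j => q u j)) → (2 ∈ T.image (fun j => q v j)) → False := by
    intro u hu v hv huv h2u h2v
    obtain ⟨j, hj, hqj⟩ := Finset.mem_image.1 h2u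
    obtain ⟨j', hj', hqj'⟩ := Finset.mem_image.1 h2v
    exact hcross u hu v hv huv j hj j' hj' (hqj.trans hqj'.symm)
  obtain ⟨i1, hi1S, i2, hi2S, i3, hi3S, h12, h13, h23, hB1no2, hB2no2⟩ :
      ∃ i1 ∈ S, ∃ i2 ∈ S, ∃ i3 ∈ S, i1 ≠ i2 ∧ i1 ≠ i3 ∧ i2 ≠ i3 ∧
        2 ∉ T.image (fun j => q i1 j) ∧ 2 ∉ T.image (fun j => q i2 j) := by
    by_cases hQx : 2 ∈ T.image (fun j => q x j)
    · refine ⟨y, hyS, z, hzS, x, hxS, hyz, fun h => hxy h.symm, fun h => hxz h.symm, ?_, ?_⟩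
      · exact fun h => hQatmost y hyS x hxS hxy.symm h hQx
      · exact fun h => hQatmost z hzS x hxS hxz.symm h hQx
    · by_cases hQy : 2 ∈ T.image (fun j => q y j)
      · refine ⟨x, hxS, z, hzS, y, hyS, hxz, hxy, fun h => hyz h.symm, hQx, ?_⟩
        exact fun h => hQatmost z hzS y hyS hyz.symm h hQy
      · exact ⟨x, hxS, y, hyS, z, hzS, hxy, hxz, hyz, hQx, hQy⟩
  set B₁ : Finset ℕ := T.image (fun j => q i1 j) with hB1def
  set B₂ : Finset ℕ := T.image (fun j => q i2 j) with hB2def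
  set B₃ : Finset ℕ := T.image (fun j => q i3 j) with hB3def
  have hB1P : B₁ ⊆ P := by
    intro v hv; obtain ⟨j, hj, hqj⟩ := Finset.mem_image.1 hv
    exact hqj ▸ hqmemP i1 hi1S j hj
  have hB2P : B₂ ⊆ P := by
    intro v hv; obtain ⟨j, hj, hqj⟩ := Finset.mem_image.1 hv
    exact hqj ▸ hqmemP i2 hi2S j hj
  have hB3P : B₃ ⊆ P := by
    intro v hv; obtain ⟨j, hj, hqj⟩ := Finset.mem_image.1 hv
    exact hqj ▸ hqmemP i3 hi3S j hj
  have hdisj12 : Disjoint B₁ B₂ := by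
    rw [Finset.disjoint_left]
    intro v hv hv'
    obtain ⟨j, hj, hqj⟩ := Finset.mem_image.1 hv
    obtain ⟨j', hj', hqj'⟩ := Finset.mem_image.1 hv'
    exact hcross i1 hi1S i2 hi2S h12 j hj j' hj' (hqj.trans hqj'.symm)
  have hdisj13 : Disjoint B₁ B₃ := by
    rw [Finset.disjoint_left]
    intro v hv hv'
    obtain ⟨j, hj, hqj⟩ := Finset.mem_image.1 hv
    obtain ⟨j', hj', hqj'⟩ := Finset.mem_image.1 hv'
    exact hcross i1 hi1S i3 hi3S h13 j hj j' hj' (hqj.trans hqj'.symm)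
  have hdisj23 : Disjoint B₂ B₃ := by
    rw [Finset.disjoint_left]
    intro v hv hv'
    obtain ⟨j, hj, hqj⟩ := Finset.mem_image.1 hv
    obtain ⟨j', hj', hqj'⟩ := Finset.mem_image.1 hv'
    exact hcross i2 hi2S i3 hi3S h23 j hj j' hj' (hqj.trans hqj'.symm)
  have hBsum : B₁.card + B₂.card + B₃.card ≤ π := by
    have hu : (B₁ ∪ B₂ ∪ B₃).card = B₁.card + B₂.card + B₃.card := by
      rw [Finset.card_union_of_disjoint, Finset.card_union_of_disjoint hdisj12]
      exact Finset.disjoint_union_left.2 ⟨hdisj13, hdisj23⟩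
    have hsub : B₁ ∪ B₂ ∪ B₃ ⊆ P := by
      intro v hv
      rcases Finset.mem_union.1 hv with hv' | hv'
      · rcases Finset.mem_union.1 hv' with h | h
        · exact hB1P h
        · exact hB2P h
      · exact hB3P hv'
    have := Finset.card_le_card hsub
    rw [hu] at this
    omega
  have hB1ne : 1 ≤ B₁.card := Finset.card_pos.2 ⟨q i1 j0, Finset.mem_image.2 ⟨j0, hj0, rfl⟩⟩
  have hB2ne : 1 ≤ B₂.card := Finset.card_pos.2 ⟨q i2 j0, Finset.mem_image.2 ⟨j0, hj0, rfl⟩⟩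
  have hB3ne : 1 ≤ B₃.card := Finset.card_pos.2 ⟨q i3 j0, Finset.mem_image.2 ⟨j0, hj0, rfl⟩⟩
  -- fiberwise decomposition of T over the first two coordinates
  have hfiber : T.card = ∑ c ∈ B₁ ×ˢ B₂, (T.filter (fun j => (q i1 j, q i2 j) = c)).card := by
    apply Finset.card_eq_sum_card_fiberwise
    intro j hj
    exact Finset.mem_product.2
      ⟨Finset.mem_image.2 ⟨j, hj, rfl⟩, Finset.mem_image.2 ⟨j, hj, rfl⟩⟩
  have h13' : i3 ≠ i1 := fun h => h13 h.symm
  -- per-cell bound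
  have hcell : ∀ c ∈ B₁ ×ˢ B₂,
      (T.filter (fun j => (q i1 j, q i2 j) = c)).card ≤
        if c.1 * c.2 ≤ p then B₃.card else 1 := by
    intro c hc
    obtain ⟨hc1, hc2⟩ := Finset.mem_product.1 hc
    obtain ⟨j₁, hj₁, hqj₁⟩ := Finset.mem_image.1 hc1
    obtain ⟨j₂, hj₂, hqj₂⟩ := Finset.mem_image.1 hc2
    have hc1p : c.1.Prime := hqj₁ ▸ (hqfacts i1 hi1S j₁ hj₁).1
    have hc2p : c.2.Prime := hqj₂ ▸ (hqfacts i2 hi2S j₂ hj₂).1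
    have hc1ne2 : c.1 ≠ 2 := fun h => hB1no2 (h ▸ hc1)
    have hc2ne2 : c.2 ≠ 2 := fun h => hB2no2 (h ▸ hc2)
    have hc12 : c.1 ≠ c.2 := by
      have := hcross i1 hi1S i2 hi2S h12 j₁ hj₁ j₂ hj₂
      rw [hqj₁, hqj₂] at this
      exact this
    have hcop : Nat.Coprime c.1 c.2 := (Nat.coprime_primes hc1p hc2p).2 hc12
    have key2 : ∀ j ∈ T, ∀ j' ∈ T, j ≠ j' → (q i1 j, q i2 j) = c →
        (q i1 j', q i2 j') = c → c.1 * c.2 ∣ Nat.gcd (m j) (m j') := by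
      intro j hj j' hj' hjj' he he'
      have e1 : q i1 j = c.1 := congrArg Prod.fst he
      have e2 : q i2 j = c.2 := congrArg Prod.snd he
      have e1' : q i1 j' = c.1 := congrArg Prod.fst he'
      have e2' : q i2 j' = c.2 := congrArg Prod.snd he'
      have d1 : c.1 ∣ Nat.gcd (m j) (m j') :=
        Nat.dvd_gcd (e1 ▸ (hqfacts i1 hi1S j hj).2.2.1)
          (e1' ▸ (hqfacts i1 hi1S j' hj').2.2.1)
      have d2 : c.2 ∣ Nat.gcd (m j) (m j') :=
        Nat.dvd_gcd (e2 ▸ (hqfacts i2 hi2S j hj).2.2.1)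
          (e2' ▸ (hqfacts i2 hi2S j' hj').2.2.1)
      exact hcop.mul_dvd_of_dvd_of_dvd d1 d2
    by_cases hall : c.1 * c.2 ≤ p
    · rw [if_pos hall]
      apply Finset.card_le_card_of_injOn (fun j => q i3 j)
      · intro j hj
        exact Finset.mem_image.2 ⟨j, (Finset.mem_filter.1 hj).1, rfl⟩
      · intro j hj j' hj' he3
        by_contra hjj'
        obtain ⟨hjT, hje⟩ := Finset.mem_filter.1 hj
        obtain ⟨hj'T, hj'e⟩ := Finset.mem_filter.1 hj'
        have h12dvd := key2 j hjT j' hj'T hjj' hje hj'e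
        have he3' : q i3 j = q i3 j' := he3
        have d3 : q i3 j ∣ Nat.gcd (m j) (m j') :=
          Nat.dvd_gcd (hqfacts i3 hi3S j hjT).2.2.1
            (he3' ▸ (hqfacts i3 hi3S j' hj'T).2.2.1)
        have hq3p := (hqfacts i3 hi3S j hjT).1
        -- q i3 j differs from c.1 and c.2
        have hne1 : q i3 j ≠ c.1 := by
          have := hcross i3 hi3S i1 hi1S h13' j hjT j₁ hj₁
          rw [hqj₁] at this; exact this
        have hne2 : q i3 j ≠ c.2 := by
          have := hcross i3 hi3S i2 hi2S h23.symm j hjT j₂ hj₂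
          rw [hqj₂] at this; exact this
        have hcop3 : Nat.Coprime (c.1 * c.2) (q i3 j) :=
          Nat.Coprime.mul ((Nat.coprime_primes hc1p hq3p).2 (fun h => hne1 h.symm))
            ((Nat.coprime_primes hc2p hq3p).2 (fun h => hne2 h.symm))
        have dall : (c.1 * c.2) * q i3 j ∣ Nat.gcd (m j) (m j') :=
          hcop3.mul_dvd_of_dvd_of_dvd h12dvd d3
        have hgpos : 0 < Nat.gcd (m j) (m j') := Nat.gcd_pos_of_pos_left _ (hm j)
        have hle := Nat.le_of_dvd hgpos dall
        have h15 : 15 ≤ c.1 * c.2 := by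
          rcases odd_prime_pair_classify c.1 c.2 hc1p hc2p hc1ne2 hc2ne2 hc12
            (by omega) with ⟨ha, hb | hb⟩ | ⟨ha, hb | hb⟩ <;> rw [ha, hb] <;> norm_num
        have h30 : 30 ≤ (c.1 * c.2) * q i3 j := by
          calc (30 : ℕ) = 15 * 2 := by norm_num
          _ ≤ (c.1 * c.2) * q i3 j := Nat.mul_le_mul h15 hq3p.two_le
        have := hgcd j j' hjj'
        omega
    · rw [if_neg hall]
      rw [Finset.card_le_one]
      intro j hj j' hj'
      by_contra hjj'
      obtain ⟨hjT, hje⟩ := Finset.mem_filter.1 hj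
      obtain ⟨hj'T, hj'e⟩ := Finset.mem_filter.1 hj'
      have h12dvd := key2 j hjT j' hj'T hjj' hje hj'e
      have hgpos : 0 < Nat.gcd (m j) (m j') := Nat.gcd_pos_of_pos_left _ (hm j)
      have hle := Nat.le_of_dvd hgpos h12dvd
      have := hgcd j j' hjj'
      omega
  -- the filtered (allowed) cells
  set W : ℕ := ((B₁ ×ˢ B₂).filter (fun c => c.1 * c.2 ≤ p)).card with hWdef
  have hW2 : W ≤ 2 := by
    have hcellfacts : ∀ c ∈ (B₁ ×ˢ B₂).filter (fun c => c.1 * c.2 ≤ p),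
        (c.1 = 3 ∧ (c.2 = 5 ∨ c.2 = 7)) ∨ (c.2 = 3 ∧ (c.1 = 5 ∨ c.1 = 7)) := by
      intro c hcm
      obtain ⟨hcprod, hcle⟩ := Finset.mem_filter.1 hcm
      obtain ⟨hc1, hc2⟩ := Finset.mem_product.1 hcprod
      obtain ⟨j₁, hj₁, hqj₁⟩ := Finset.mem_image.1 hc1
      obtain ⟨j₂, hj₂, hqj₂⟩ := Finset.mem_image.1 hc2
      have hc1p : c.1.Prime := hqj₁ ▸ (hqfacts i1 hi1S j₁ hj₁).1
      have hc2p : c.2.Prime := hqj₂ ▸ (hqfacts i2 hi2S j₂ hj₂).1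
      have hc1ne2 : c.1 ≠ 2 := fun h => hB1no2 (h ▸ hc1)
      have hc2ne2 : c.2 ≠ 2 := fun h => hB2no2 (h ▸ hc2)
      have hc12 : c.1 ≠ c.2 := by
        have := hcross i1 hi1S i2 hi2S h12 j₁ hj₁ j₂ hj₂
        rw [hqj₁, hqj₂] at this
        exact this
      exact odd_prime_pair_classify c.1 c.2 hc1p hc2p hc1ne2 hc2ne2 hc12 (by omega)
    by_cases h3B : 3 ∈ B₁
    · have hsub : (B₁ ×ˢ B₂).filter (fun c => c.1 * c.2 ≤ p) ⊆
          ({(3,5),(3,7)} : Finset (ℕ × ℕ)) := by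
        intro c hcm
        have hclass := hcellfacts c hcm
        obtain ⟨hcprod, _⟩ := Finset.mem_filter.1 hcm
        obtain ⟨hc1, hc2⟩ := Finset.mem_product.1 hcprod
        have hc2ne3 : c.2 ≠ 3 := by
          intro h
          exact (Finset.disjoint_left.1 hdisj12 h3B) (h ▸ hc2)
        rcases hclass with ⟨ha, hb | hb⟩ | ⟨ha, _⟩
        · rw [Finset.mem_insert, Finset.mem_singleton]
          left; exact Prod.ext ha hb
        · rw [Finset.mem_insert, Finset.mem_singleton]
          right; exact Prod.ext ha hb
        · exact absurd ha hc2ne3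
      have hcard := Finset.card_le_card hsub
      have : ({(3,5),(3,7)} : Finset (ℕ × ℕ)).card ≤ 2 := by decide
      omega
    · have hsub : (B₁ ×ˢ B₂).filter (fun c => c.1 * c.2 ≤ p) ⊆
          ({(5,3),(7,3)} : Finset (ℕ × ℕ)) := by
        intro c hcm
        have hclass := hcellfacts c hcm
        obtain ⟨hcprod, _⟩ := Finset.mem_filter.1 hcm
        obtain ⟨hc1, hc2⟩ := Finset.mem_product.1 hcprod
        have hc1ne3 : c.1 ≠ 3 := by
          intro h
          exact h3B (h ▸ hc1)
        rcases hclass with ⟨ha, _⟩ | ⟨ha, hb | hb⟩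
        · exact absurd ha hc1ne3
        · rw [Finset.mem_insert, Finset.mem_singleton]
          left; exact Prod.ext hb ha
        · rw [Finset.mem_insert, Finset.mem_singleton]
          right; exact Prod.ext hb ha
      have hcard := Finset.card_le_card hsub
      have : ({(5,3),(7,3)} : Finset (ℕ × ℕ)).card ≤ 2 := by decide
      omega
  -- summation
  have hsum_le : T.card ≤ W * B₃.card +
      ((B₁ ×ˢ B₂).filter (fun c => ¬ c.1 * c.2 ≤ p)).card := by
    rw [hfiber]
    calc ∑ c ∈ B₁ ×ˢ B₂, (T.filter (fun j => (q i1 j, q i2 j) = c)).card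
        ≤ ∑ c ∈ B₁ ×ˢ B₂, (if c.1 * c.2 ≤ p then B₃.card else 1) :=
          Finset.sum_le_sum hcell
    _ = W * B₃.card + ((B₁ ×ˢ B₂).filter (fun c => ¬ c.1 * c.2 ≤ p)).card := by
          rw [Finset.sum_ite, Finset.sum_const, Finset.sum_const, smul_eq_mul,
            smul_eq_mul, mul_one, hWdef]
  have hWneg : W + ((B₁ ×ˢ B₂).filter (fun c => ¬ c.1 * c.2 ≤ p)).card =
      B₁.card * B₂.card := by
    rw [hWdef, Finset.card_filter_add_card_filter_not, Finset.card_product]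
  -- numeric finale
  have hnum := numeric_bound B₁.card B₂.card B₃.card hB1ne hB2ne hB3ne (by omega)
  have hprod_le : B₁.card * B₂.card + 2 * B₃.card ≤ 2 * π := by omega
  interval_cases W <;> omega


theorem min_ce_not_in_set (k : ℕ) (a : Fin k → ℤ) (m : Fin k → ℕ)
    (hk : 2 ≤ k)
    (hm : ∀ i, 0 < m i)
    (hdisj : ∀ i j, i ≠ j → Disjoint (congClass (a i) (m i)) (congClass (a j) (m j)))
    (hgcd : ∀ i j, i ≠ j → Nat.gcd (m i) (m j) < k)
    (hkmin : ∀ k', 2 ≤ k' → IsCounterexample k' → k ≤ k')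
    (hsummin : ∀ (a' : Fin k → ℤ) (m' : Fin k → ℕ),
      (∀ i, 0 < m' i) →
      (∀ i j, i ≠ j → Disjoint (congClass (a' i) (m' i)) (congClass (a' j) (m' j))) →
      (∀ i j, i ≠ j → Nat.gcd (m' i) (m' j) < k) →
      ∑ i, m i ≤ ∑ i, m' i) :
    k ∉ ({8, 12, 14, 18, 20, 24, 30} : Finset ℕ) := by
  intro hkmem
  simp only [Finset.mem_insert, Finset.mem_singleton] at hkmem
  have base : ∀ p : ℕ, p.Prime → ∀ π : ℕ,
      ((Finset.range p).filter Nat.Prime).card = π → π ≤ 9 → 3 * π < p + 3 → p ≤ 29 →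
      k = p + 1 → False := by
    intro p hp π h1 h2 h3 h4 hkp
    subst hkp
    exact key p hp π h1 h2 h3 h4 a m hm hdisj hgcd
      (fun hce => by have := hkmin p hp.two_le hce; omega)
  rcases hkmem with h | h | h | h | h | h | h
  · exact base 7 (by norm_num) 3 (by decide) (by norm_num) (by norm_num) (by norm_num) (by omega)
  · exact base 11 (by norm_num) 4 (by decide) (by norm_num) (by norm_num) (by norm_num) (by omega)
  · exact base 13 (by norm_num) 5 (by decide) (by norm_num) (by norm_num) (by norm_num) (by omega)
  · exact base 17 (by norm_num) 6 (by decide) (by norm_num) (by norm_num) (by norm_num) (by omega)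
  · exact base 19 (by norm_num) 7 (by decide) (by norm_num) (by norm_num) (by norm_num) (by omega)
  · exact base 23 (by norm_num) 8 (by decide) (by norm_num) (by norm_num) (by norm_num) (by omega)
  · exact base 29 (by norm_num) 9 (by decide) (by norm_num) (by norm_num) (by norm_num) (by omega)
end

section
/- Let a_1, …, a_ℓ be integers and m_1, …, m_ℓ positive integers, and let M be a positive multiple of lcm{gcd(m_i, m_j) : 1 ≤ i < j ≤ ℓ}. If Σ_{i=1}^{ℓ} M/gcd(m_i, M) > M, then there exist indices i < j and integers α, β, γ with a_i + α·m_i = a_j + β·m_j + γ·M. -/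
theorem pigeonhole_intersection (ℓ : ℕ) (a : Fin ℓ → ℤ) (m : Fin ℓ → ℕ)
    (hm : ∀ i, 0 < m i) (M : ℕ) (hM : 0 < M)
    (hdvd : ((Finset.univ.filter (fun p : Fin ℓ × Fin ℓ => p.1 < p.2)).lcm
        (fun p => Nat.gcd (m p.1) (m p.2))) ∣ M)
    (hsum : M < ∑ i, M / Nat.gcd (m i) M) :
    ∃ i j : Fin ℓ, i < j ∧ ∃ α β γ : ℤ,
      a i + α * (m i : ℤ) = a j + β * (m j : ℤ) + γ * (M : ℤ) := by
  by_contra hcon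
  push_neg at hcon
  set d : Fin ℓ → ℕ := fun i => Nat.gcd (m i) M with hd
  have hdpos : ∀ i, 0 < d i := fun i => Nat.gcd_pos_of_pos_right _ hM
  have hdM : ∀ i, d i ∣ M := fun i => Nat.gcd_dvd_right _ _
  set r : Fin ℓ → ℕ := fun i => (a i % (d i : ℤ)).toNat with hr
  set S : Fin ℓ → Finset ℕ :=
    fun i => (Finset.range (M / d i)).image (fun k => r i + k * d i) with hS
  have hcard : ∀ i, (S i).card = M / d i := by
    intro i
    rw [hS]
    rw [Finset.card_image_of_injective _ ?_, Finset.card_range]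
    intro k k' hkk'
    simp only at hkk'
    have : k * d i = k' * d i := by omega
    exact Nat.eq_of_mul_eq_mul_right (hdpos i) this
  have hrlt : ∀ i, r i < d i := by
    intro i
    have h1 := Int.emod_lt_of_pos (a i) (by exact_mod_cast hdpos i : (0:ℤ) < d i)
    have h2 := Int.emod_nonneg (a i) (by exact_mod_cast (hdpos i).ne' : (d i : ℤ) ≠ 0)
    simp only [hr]
    omega
  have hsub : ∀ i, S i ⊆ Finset.range M := by
    intro i x hx
    simp only [hS, Finset.mem_image, Finset.mem_range] at hx ⊢
    obtain ⟨k, hk, rfl⟩ := hx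
    have h3 : (k + 1) * d i ≤ M := by
      have := Nat.mul_le_mul_right (d i) (Nat.succ_le_of_lt hk)
      rwa [Nat.div_mul_cancel (hdM i)] at this
    have h4 : (k + 1) * d i = k * d i + d i := by ring
    have := hrlt i
    linarith
  have hmod : ∀ i, ∀ x ∈ S i, (d i : ℤ) ∣ ((x : ℤ) - a i) := by
    intro i x hx
    simp only [hS, Finset.mem_image, Finset.mem_range] at hx
    obtain ⟨k, hk, rfl⟩ := hx
    have h2 := Int.emod_nonneg (a i) (by exact_mod_cast (hdpos i).ne' : (d i : ℤ) ≠ 0)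
    have hrc : (r i : ℤ) = a i % (d i : ℤ) := by
      rw [hr]; exact Int.toNat_of_nonneg h2
    refine ⟨(k : ℤ) - a i / (d i : ℤ), ?_⟩
    have hde := Int.mul_ediv_add_emod (a i) (d i : ℤ)
    push_cast
    linear_combination hrc + hde
  have key : ∀ i j : Fin ℓ, i < j → ∀ x : ℕ,
      (d i : ℤ) ∣ ((x : ℤ) - a i) → (d j : ℤ) ∣ ((x : ℤ) - a j) → False := by
    intro i j hij x hi hj
    have hgM : Nat.gcd (m i) (m j) ∣ M := by
      refine dvd_trans ?_ hdvd
      exact Finset.dvd_lcm (Finset.mem_filter.mpr ⟨Finset.mem_univ (i, j), hij⟩)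
    have hgdi : (Nat.gcd (m i) (m j) : ℤ) ∣ (d i : ℤ) := by
      exact_mod_cast Nat.dvd_gcd (Nat.gcd_dvd_left _ _) hgM
    have hgdj : (Nat.gcd (m i) (m j) : ℤ) ∣ (d j : ℤ) := by
      exact_mod_cast Nat.dvd_gcd (Nat.gcd_dvd_right _ _) hgM
    have hga : (Nat.gcd (m i) (m j) : ℤ) ∣ (a i - a j) := by
      have h := dvd_sub (hgdj.trans hj) (hgdi.trans hi)
      have he : ((x : ℤ) - a j) - ((x : ℤ) - a i) = a i - a j := by ring
      rwa [he] at h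
    obtain ⟨t, ht⟩ := hga
    have hb : (Nat.gcd (m i) (m j) : ℤ) =
        (m i : ℤ) * Int.gcdA (m i) (m j) + (m j : ℤ) * Int.gcdB (m i) (m j) := by
      have := Int.gcd_eq_gcd_ab (m i : ℤ) (m j : ℤ)
      simpa using this
    exact hcon i j hij (-(Int.gcdA (m i) (m j) * t)) (Int.gcdB (m i) (m j) * t) 0
      (by linear_combination ht + t * hb)
  have hdisj : ∀ i ∈ (Finset.univ : Finset (Fin ℓ)), ∀ j ∈ Finset.univ,
      i ≠ j → Disjoint (S i) (S j) := by
    intro i _ j _ hij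
    rw [Finset.disjoint_left]
    intro x hxi hxj
    rcases hij.lt_or_gt with h | h
    · exact key i j h x (hmod i x hxi) (hmod j x hxj)
    · exact key j i h x (hmod j x hxj) (hmod i x hxi)
  have hle : (Finset.univ.biUnion S).card ≤ M := by
    have : Finset.univ.biUnion S ⊆ Finset.range M :=
      Finset.biUnion_subset.mpr (fun i _ => hsub i)
    simpa using Finset.card_le_card this
  rw [Finset.card_biUnion hdisj] at hle
  have : ∑ i, (S i).card = ∑ i, M / d i := by
    exact Finset.sum_congr rfl (fun i _ => hcard i)
  rw [this] at hle
  have hle' : ∑ i, M / Nat.gcd (m i) M ≤ M := by simpa [hd] using hle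
  omega
end
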